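/- arXiv:1608.00302 — 12 statements merged into one kernel-verified Lean document; each statement's English description precedes it below -/
import Mathlib

section
/- Let G = (A, R) be a finite argument graph and let E ⊆ A be conflict-free. Let E⁺ = {β ∈ A | ∃α ∈ E, (α, β) ∈ R} and E⁻ = {β ∈ A | ∃α ∈ E, (β, α) ∈ R}. Then for every A' ⊆ A, E is an admissible set of the induced subgraph G↾A' if and only if E ⊆ A' and A' ∩ (E⁻ \ E⁺) = ∅. -/
open scoped Classical

variable {α : Type*} [DecidableEq α]

/-- `E` is conflict-free w.r.t. attack relation `R`. -/
def ConflictFree (R : α → α → Prop) (E : Finset α) : Prop :=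
  ∀ a ∈ E, ∀ b ∈ E, ¬ R a b

/-- `a` is acceptable with respect to `E` under attack relation `R`. -/
def Acceptable (R : α → α → Prop) (E : Finset α) (a : α) : Prop :=
  ∀ b, R b a → ∃ c ∈ E, R c b

/-- The attack relation of the induced subgraph on `A'`: `R ∩ (A' × A')`. -/
def Restrict (A' : Finset α) (R : α → α → Prop) : α → α → Prop :=
  fun a b => a ∈ A' ∧ b ∈ A' ∧ R a b

/-- `E` is an admissible set of the induced subgraph on `A'`. -/
def AdmissibleIn (A' : Finset α) (R : α → α → Prop) (E : Finset α) : Prop :=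
  E ⊆ A' ∧ ConflictFree (Restrict A' R) E ∧
    ∀ a ∈ E, Acceptable (Restrict A' R) E a

/-- `E` is a complete extension of the induced subgraph on `A'`. -/
def CompleteIn (A' : Finset α) (R : α → α → Prop) (E : Finset α) : Prop :=
  AdmissibleIn A' R E ∧ ∀ a ∈ A', Acceptable (Restrict A' R) E a → a ∈ E

/-- `E` is a stable extension of the induced subgraph on `A'`. -/
def StableIn (A' : Finset α) (R : α → α → Prop) (E : Finset α) : Prop :=
  E ⊆ A' ∧ ConflictFree (Restrict A' R) E ∧
    ∀ a ∈ A', a ∉ E → ∃ c ∈ E, Restrict A' R c a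

/-- `E` is a preferred extension (⊆-maximal admissible set) of the induced subgraph on `A'`. -/
def PreferredIn (A' : Finset α) (R : α → α → Prop) (E : Finset α) : Prop :=
  AdmissibleIn A' R E ∧ ∀ F : Finset α, AdmissibleIn A' R F → E ⊆ F → F = E

/-- `E` is the grounded extension (⊆-least complete extension) of the induced subgraph on `A'`. -/
def GroundedIn (A' : Finset α) (R : α → α → Prop) (E : Finset α) : Prop :=
  CompleteIn A' R E ∧ ∀ F : Finset α, CompleteIn A' R F → E ⊆ F

theorem stmt1 (A : Finset α) (R : Finset (α × α)) (hRA : R ⊆ A ×ˢ A)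
    (E : Finset α) (hEA : E ⊆ A)
    (hcf : ConflictFree (fun a b => (a, b) ∈ R) E)
    (Eplus Eminus : Finset α)
    (hEp : Eplus = A.filter (fun b => ∃ a ∈ E, (a, b) ∈ R))
    (hEm : Eminus = A.filter (fun b => ∃ a ∈ E, (b, a) ∈ R))
    (A' : Finset α) (hA' : A' ⊆ A) :
    AdmissibleIn A' (fun a b => (a, b) ∈ R) E ↔
      E ⊆ A' ∧ A' ∩ (Eminus \ Eplus) = ∅ := by
  subst hEp hEm
  constructor
  · rintro ⟨hEA', _, hacc⟩
    refine ⟨hEA', Finset.eq_empty_iff_forall_notMem.2 ?_⟩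
    intro b hb
    simp only [Finset.mem_inter, Finset.mem_sdiff, Finset.mem_filter] at hb
    obtain ⟨hbA', ⟨_, e, heE, hatt⟩, hnp⟩ := hb
    obtain ⟨c, hcE, _, _, hcb⟩ := hacc e heE b ⟨hbA', hEA' heE, hatt⟩
    exact hnp ⟨hA' hbA', c, hcE, hcb⟩
  · rintro ⟨hEA', hempty⟩
    refine ⟨hEA', fun a ha b hb hr => hcf a ha b hb hr.2.2, ?_⟩
    intro a haE b ⟨hbA', _, hba⟩
    have hbnot : b ∉ A' ∩ ((A.filter (fun b => ∃ a ∈ E, (b, a) ∈ R)) \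
        (A.filter (fun b => ∃ a ∈ E, (a, b) ∈ R))) := by
      rw [hempty]; exact Finset.notMem_empty b
    have hbm : b ∈ A.filter (fun b => ∃ a ∈ E, (b, a) ∈ R) :=
      Finset.mem_filter.2 ⟨hA' hbA', a, haE, hba⟩
    have : b ∈ A.filter (fun b => ∃ a ∈ E, (a, b) ∈ R) := by
      by_contra h
      exact hbnot (Finset.mem_inter.2 ⟨hbA', Finset.mem_sdiff.2 ⟨hbm, h⟩⟩)
    obtain ⟨_, c, hcE, hcb⟩ := Finset.mem_filter.1 this
    exact ⟨c, hcE, hEA' hcE, hbA', hcb⟩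
end

section
/- Let G = (A, R) be a finite argument graph and let E ⊆ A be conflict-free. Let E⁺ = {β ∈ A | ∃α ∈ E, (α, β) ∈ R}, E⁻ = {β ∈ A | ∃α ∈ E, (β, α) ∈ R}, and I = A \ (E ∪ E⁺ ∪ E⁻). Let B ⊆ I ∪ E⁺ and B' = B ∩ I. Then E is a complete extension of the induced subgraph G↾(E ∪ B) if and only if for every α ∈ B', the set {β ∈ A | (β, α) ∈ R} ∩ B' is nonempty. -/
open scoped Classical

variable {α : Type*} [DecidableEq α]

theorem stmt4 (A : Finset α) (R : Finset (α × α)) (hRA : R ⊆ A ×ˢ A)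
    (E : Finset α) (hEA : E ⊆ A)
    (hcf : ConflictFree (fun a b => (a, b) ∈ R) E)
    (Eplus Eminus I : Finset α)
    (hEp : Eplus = A.filter (fun b => ∃ a ∈ E, (a, b) ∈ R))
    (hEm : Eminus = A.filter (fun b => ∃ a ∈ E, (b, a) ∈ R))
    (hI : I = A \ (E ∪ Eplus ∪ Eminus))
    (B B' : Finset α) (hB : B ⊆ I ∪ Eplus) (hB' : B' = B ∩ I) :
    CompleteIn (E ∪ B) (fun a b => (a, b) ∈ R) E ↔
      ∀ a ∈ B', ((A.filter (fun b => (b, a) ∈ R)) ∩ B').Nonempty := by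
  have hmemI : ∀ x, x ∈ I ↔ x ∈ A ∧ x ∉ E ∧ (¬ ∃ a ∈ E, (a, x) ∈ R) ∧
      (¬ ∃ a ∈ E, (x, a) ∈ R) := by
    intro x
    subst hEp hEm hI
    simp only [Finset.mem_sdiff, Finset.mem_union, Finset.mem_filter]
    aesop
  have hmemB' : ∀ x, x ∈ B' ↔ x ∈ B ∧ x ∈ I := by
    intro x; subst hB'; simp [Finset.mem_inter]
  have hmemEp : ∀ x, x ∈ Eplus ↔ x ∈ A ∧ ∃ a ∈ E, (a, x) ∈ R := by
    intro x; subst hEp; simp [Finset.mem_filter]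
  -- admissibility always holds
  have hadm : AdmissibleIn (E ∪ B) (fun a b => (a, b) ∈ R) E := by
    refine ⟨Finset.subset_union_left, ?_, ?_⟩
    · intro a ha b hb hab
      exact hcf a ha b hb hab.2.2
    · intro a ha b hb
      obtain ⟨hbEB, _, hba⟩ := hb
      rcases Finset.mem_union.1 hbEB with hbE | hbB
      · exact absurd hba (hcf b hbE a ha)
      · rcases Finset.mem_union.1 (hB hbB) with hbI | hbEp
        · exact absurd ⟨a, ha, hba⟩ ((hmemI b).1 hbI).2.2.2
        · obtain ⟨_, c, hcE, hcb⟩ := (hmemEp b).1 hbEp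
          exact ⟨c, hcE, Finset.mem_union_left _ hcE, hbEB, hcb⟩
  constructor
  · rintro ⟨_, hcomp⟩ a ha
    obtain ⟨haB, haI⟩ := hmemB' a |>.1 ha
    obtain ⟨haA, haE, hanp, _⟩ := (hmemI a).1 haI
    by_contra hempty
    rw [Finset.not_nonempty_iff_eq_empty] at hempty
    have hacc : Acceptable (Restrict (E ∪ B) (fun a b => (a, b) ∈ R)) E a := by
      intro b hb
      obtain ⟨hbEB, _, hba⟩ := hb
      rcases Finset.mem_union.1 hbEB with hbE | hbB
      · exact absurd ⟨b, hbE, hba⟩ hanp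
      · rcases Finset.mem_union.1 (hB hbB) with hbI | hbEp
        · exfalso
          have hbmem : b ∈ (A.filter (fun b => (b, a) ∈ R)) ∩ B' := by
            refine Finset.mem_inter.2 ⟨Finset.mem_filter.2 ⟨((hmemI b).1 hbI).1, hba⟩, ?_⟩
            exact (hmemB' b).2 ⟨hbB, hbI⟩
          simp [hempty] at hbmem
        · obtain ⟨_, c, hcE, hcb⟩ := (hmemEp b).1 hbEp
          exact ⟨c, hcE, Finset.mem_union_left _ hcE, hbEB, hcb⟩
    exact haE (hcomp a (Finset.mem_union_right _ haB) hacc)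
  · intro hatt
    refine ⟨hadm, ?_⟩
    intro a haEB hacc
    rcases Finset.mem_union.1 haEB with haE | haB
    · exact haE
    · exfalso
      rcases Finset.mem_union.1 (hB haB) with haI | haEp
      · have haB' : a ∈ B' := (hmemB' a).2 ⟨haB, haI⟩
        obtain ⟨b, hb⟩ := hatt a haB'
        obtain ⟨hbf, hbB'⟩ := Finset.mem_inter.1 hb
        obtain ⟨hbA, hba⟩ := Finset.mem_filter.1 hbf
        obtain ⟨hbB, hbI⟩ := (hmemB' b).1 hbB'
        obtain ⟨d, hdE, _, _, hdb⟩ :=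
          hacc b ⟨Finset.mem_union_right _ hbB, haEB, hba⟩
        exact ((hmemI b).1 hbI).2.2.1 ⟨d, hdE, hdb⟩
      · obtain ⟨_, c, hcE, hca⟩ := (hmemEp a).1 haEp
        obtain ⟨d, hdE, _, _, hdc⟩ :=
          hacc c ⟨Finset.mem_union_left _ hcE, haEB, hca⟩
        exact hcf d hdE c hcE hdc
end

section
/- Let G = (A, R) be a finite argument graph and let E ⊆ A be conflict-free. Let E⁺ = {β ∈ A | ∃α ∈ E, (α, β) ∈ R}, E⁻ = {β ∈ A | ∃α ∈ E, (β, α) ∈ R}, and I = A \ (E ∪ E⁺ ∪ E⁻). Let B ⊆ I ∪ E⁺ and B' = B ∩ I. Then E is a preferred extension of the induced subgraph G↾(E ∪ B) if and only if E is a complete extension of G↾(E ∪ B) and the empty set is the only admissible set of the induced subgraph G↾B'. -/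
open scoped Classical

variable {α : Type*} [DecidableEq α]

theorem stmt5 (A : Finset α) (R : Finset (α × α)) (hRA : R ⊆ A ×ˢ A)
    (E : Finset α) (hEA : E ⊆ A)
    (hcf : ConflictFree (fun a b => (a, b) ∈ R) E)
    (Eplus Eminus I : Finset α)
    (hEp : Eplus = A.filter (fun b => ∃ a ∈ E, (a, b) ∈ R))
    (hEm : Eminus = A.filter (fun b => ∃ a ∈ E, (b, a) ∈ R))
    (hI : I = A \ (E ∪ Eplus ∪ Eminus))
    (B B' : Finset α) (hB : B ⊆ I ∪ Eplus) (hB' : B' = B ∩ I) :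
    PreferredIn (E ∪ B) (fun a b => (a, b) ∈ R) E ↔
      (CompleteIn (E ∪ B) (fun a b => (a, b) ∈ R) E ∧
        ∀ S : Finset α, AdmissibleIn B' (fun a b => (a, b) ∈ R) S ↔ S = ∅) := by
  subst hB'
  set Rp : α → α → Prop := fun a b => (a, b) ∈ R with hRpdef
  have hBA : B ⊆ A := by
    intro x hx
    rcases Finset.mem_union.1 (hB hx) with h | h
    · rw [hI] at h; exact (Finset.mem_sdiff.1 h).1
    · rw [hEp] at h; exact (Finset.mem_filter.1 h).1
  have hIfact : ∀ x ∈ I, x ∉ E ∧ (∀ e ∈ E, (e, x) ∉ R) ∧ (∀ e ∈ E, (x, e) ∉ R) := by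
    intro x hx
    rw [hI] at hx
    obtain ⟨hxA, hxn⟩ := Finset.mem_sdiff.1 hx
    simp only [Finset.mem_union, not_or] at hxn
    obtain ⟨⟨hnE, hnEp⟩, hnEm⟩ := hxn
    refine ⟨hnE, ?_, ?_⟩
    · intro e he hex
      exact hnEp (by rw [hEp]; exact Finset.mem_filter.2 ⟨hxA, e, he, hex⟩)
    · intro e he hxe
      exact hnEm (by rw [hEm]; exact Finset.mem_filter.2 ⟨hxA, e, he, hxe⟩)
  have hEpfact : ∀ x ∈ Eplus, ∃ e ∈ E, (e, x) ∈ R := by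
    intro x hx; rw [hEp] at hx; exact (Finset.mem_filter.1 hx).2
  have hBcase : ∀ x ∈ B, x ∈ I ∨ x ∈ Eplus := fun x hx => Finset.mem_union.1 (hB hx)
  have haccE : ∀ a ∈ E, Acceptable (Restrict (E ∪ B) Rp) E a := by
    intro a ha b hb
    obtain ⟨hbm, ham, hba⟩ := hb
    rcases Finset.mem_union.1 hbm with hbE | hbB
    · exact absurd hba (hcf b hbE a ha)
    · rcases hBcase b hbB with hbI | hbEp
      · exact absurd hba ((hIfact b hbI).2.2 a ha)
      · obtain ⟨e, he, heb⟩ := hEpfact b hbEp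
        exact ⟨e, he, Finset.mem_union_left _ he, hbm, heb⟩
  constructor
  · rintro ⟨hadm, hmax⟩
    constructor
    · refine ⟨hadm, ?_⟩
      intro a haA' hacc
      have hins : AdmissibleIn (E ∪ B) Rp (insert a E) := by
        refine ⟨Finset.insert_subset haA' hadm.1, ?_, ?_⟩
        · intro x hx y hy hxy
          have hx' := Finset.mem_insert.1 hx
          have hy' := Finset.mem_insert.1 hy
          rcases hy' with hya | hyE
          · obtain ⟨c, hc, hcx⟩ := hacc x (hya ▸ hxy)
            rcases hx' with hxa | hxE
            · obtain ⟨d, hd, hdc⟩ := hacc c (hxa ▸ hcx)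
              exact hcf d hd c hc hdc.2.2
            · exact hcf c hc x hxE hcx.2.2
          · rcases hx' with hxa | hxE
            · obtain ⟨c, hc, hca⟩ := hadm.2.2 y hyE x hxy
              obtain ⟨d, hd, hdc⟩ := hacc c (hxa ▸ hca)
              exact hcf d hd c hc hdc.2.2
            · exact hcf x hxE y hyE hxy.2.2
        · intro x hx b hb
          rcases Finset.mem_insert.1 hx with hxa | hxE
          · obtain ⟨c, hc, h⟩ := hacc b (hxa ▸ hb)
            exact ⟨c, Finset.mem_insert_of_mem hc, h⟩
          · obtain ⟨c, hc, h⟩ := haccE x hxE b hb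
            exact ⟨c, Finset.mem_insert_of_mem hc, h⟩
      have heq := hmax (insert a E) hins (Finset.subset_insert a E)
      rw [← heq]; exact Finset.mem_insert_self a E
    · intro S
      constructor
      · rintro ⟨hSB', hScf, hSacc⟩
        have hSI : ∀ s ∈ S, s ∈ I := fun s hs => (Finset.mem_inter.1 (hSB' hs)).2
        have hSB : S ⊆ B := fun s hs => (Finset.mem_inter.1 (hSB' hs)).1
        have hSA' : S ⊆ E ∪ B := fun s hs => Finset.mem_union_right _ (hSB hs)
        have hadmES : AdmissibleIn (E ∪ B) Rp (E ∪ S) := by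
          refine ⟨Finset.union_subset Finset.subset_union_left hSA', ?_, ?_⟩
          · intro x hx y hy hxy
            rcases Finset.mem_union.1 hx with hxE | hxS
            · rcases Finset.mem_union.1 hy with hyE | hyS
              · exact hcf x hxE y hyE hxy.2.2
              · exact (hIfact y (hSI y hyS)).2.1 x hxE hxy.2.2
            · rcases Finset.mem_union.1 hy with hyE | hyS
              · exact (hIfact x (hSI x hxS)).2.2 y hyE hxy.2.2
              · exact hScf x hxS y hyS ⟨hSB' hxS, hSB' hyS, hxy.2.2⟩
          · intro x hx b hb
            rcases Finset.mem_union.1 hx with hxE | hxS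
            · obtain ⟨c, hc, h⟩ := haccE x hxE b hb
              exact ⟨c, Finset.mem_union_left _ hc, h⟩
            · obtain ⟨hbm, hxm, hbx⟩ := hb
              rcases Finset.mem_union.1 hbm with hbE | hbB
              · exact absurd hbx ((hIfact x (hSI x hxS)).2.1 b hbE)
              · rcases hBcase b hbB with hbI | hbEp
                · obtain ⟨c, hc, hcb⟩ :=
                    hSacc x hxS b ⟨Finset.mem_inter.2 ⟨hbB, hbI⟩, hSB' hxS, hbx⟩
                  exact ⟨c, Finset.mem_union_right _ hc,
                    Finset.mem_union_right _ (hSB hc), hbm, hcb.2.2⟩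
                · obtain ⟨e, he, heb⟩ := hEpfact b hbEp
                  exact ⟨e, Finset.mem_union_left _ he,
                    Finset.mem_union_left _ he, hbm, heb⟩
        have heq := hmax (E ∪ S) hadmES Finset.subset_union_left
        refine Finset.eq_empty_iff_forall_notMem.2 fun s hs => ?_
        have hsE : s ∈ E := by
          rw [← heq]; exact Finset.mem_union_right E hs
        exact (hIfact s (hSI s hs)).1 hsE
      · rintro rfl
        refine ⟨Finset.empty_subset _, ?_, ?_⟩ <;>
          · intro a ha; exact absurd ha (Finset.notMem_empty a)
  · rintro ⟨hcomp, honly⟩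
    refine ⟨hcomp.1, ?_⟩
    intro F hF hEF
    have hSsub : ∀ s ∈ F \ E, s ∈ B ∩ I := by
      intro s hs
      obtain ⟨hsF, hsE⟩ := Finset.mem_sdiff.1 hs
      have hsB : s ∈ B := by
        rcases Finset.mem_union.1 (hF.1 hsF) with h | h
        · exact absurd h hsE
        · exact h
      rcases hBcase s hsB with hsI | hsEp
      · exact Finset.mem_inter.2 ⟨hsB, hsI⟩
      · obtain ⟨e, he, hes⟩ := hEpfact s hsEp
        exact absurd (⟨Finset.mem_union_left _ he, hF.1 hsF, hes⟩ :
          Restrict (E ∪ B) Rp e s) (hF.2.1 e (hEF he) s hsF)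
    have hadmS : AdmissibleIn (B ∩ I) Rp (F \ E) := by
      refine ⟨hSsub, ?_, ?_⟩
      · intro x hx y hy hxy
        exact hF.2.1 x (Finset.mem_sdiff.1 hx).1 y (Finset.mem_sdiff.1 hy).1
          ⟨hF.1 (Finset.mem_sdiff.1 hx).1, hF.1 (Finset.mem_sdiff.1 hy).1, hxy.2.2⟩
      · intro x hx b hb
        obtain ⟨hbB', hxB', hbx⟩ := hb
        have hbA' : b ∈ E ∪ B := Finset.mem_union_right _ (Finset.mem_inter.1 hbB').1
        obtain ⟨c, hcF, hcb⟩ := hF.2.2 x (Finset.mem_sdiff.1 hx).1 b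
          ⟨hbA', hF.1 (Finset.mem_sdiff.1 hx).1, hbx⟩
        have hcE : c ∉ E := fun hcE =>
          (hIfact b (Finset.mem_inter.1 hbB').2).2.1 c hcE hcb.2.2
        have hcS : c ∈ F \ E := Finset.mem_sdiff.2 ⟨hcF, hcE⟩
        exact ⟨c, hcS, hSsub c hcS, hbB', hcb.2.2⟩
    have hSempty : F \ E = ∅ := (honly (F \ E)).1 hadmS
    refine Finset.Subset.antisymm ?_ hEF
    intro x hx
    by_contra hxE
    exact absurd (Finset.mem_sdiff.2 ⟨hx, hxE⟩) (by simp [hSempty])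
end

section
/- Let G = (A, R) be a finite argument graph and let E ⊆ A be conflict-free. Let E⁺ = {β ∈ A | ∃α ∈ E, (α, β) ∈ R}, E⁻ = {β ∈ A | ∃α ∈ E, (β, α) ∈ R}, and I = A \ (E ∪ E⁺ ∪ E⁻). Let B ⊆ I ∪ E⁺ and B' = B ∩ I. If E is an admissible set of the induced subgraph G↾(E ∪ B) and E' ⊆ B' is an admissible set of the induced subgraph G↾B', then E ∪ E' is an admissible set of G↾(E ∪ B). -/
open scoped Classical

variable {α : Type*} [DecidableEq α]

theorem stmt6 (A : Finset α) (R : Finset (α × α)) (hRA : R ⊆ A ×ˢ A)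
    (E : Finset α) (hEA : E ⊆ A)
    (hcf : ConflictFree (fun a b => (a, b) ∈ R) E)
    (Eplus Eminus I : Finset α)
    (hEp : Eplus = A.filter (fun b => ∃ a ∈ E, (a, b) ∈ R))
    (hEm : Eminus = A.filter (fun b => ∃ a ∈ E, (b, a) ∈ R))
    (hI : I = A \ (E ∪ Eplus ∪ Eminus))
    (B B' : Finset α) (hB : B ⊆ I ∪ Eplus) (hB' : B' = B ∩ I)
    (hadm : AdmissibleIn (E ∪ B) (fun a b => (a, b) ∈ R) E)
    (E' : Finset α) (hE'B' : E' ⊆ B')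
    (hadm' : AdmissibleIn B' (fun a b => (a, b) ∈ R) E') :
    AdmissibleIn (E ∪ B) (fun a b => (a, b) ∈ R) (E ∪ E') := by
  obtain ⟨hE1, hE2, hE3⟩ := hadm
  obtain ⟨hE'1, hE'2, hE'3⟩ := hadm'
  have hE'I : E' ⊆ I := fun x hx => (Finset.mem_inter.mp (hB' ▸ hE'B' hx)).2
  have hE'B : E' ⊆ B := fun x hx => (Finset.mem_inter.mp (hB' ▸ hE'B' hx)).1
  have hnotEp : ∀ x ∈ I, x ∉ Eplus := by
    intro x hx
    rw [hI] at hx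
    have := (Finset.mem_sdiff.mp hx).2
    simp only [Finset.mem_union] at this
    tauto
  have hnotEm : ∀ x ∈ I, x ∉ Eminus := by
    intro x hx
    rw [hI] at hx
    have := (Finset.mem_sdiff.mp hx).2
    simp only [Finset.mem_union] at this
    tauto
  have hIA : I ⊆ A := by rw [hI]; exact Finset.sdiff_subset
  refine ⟨?_, ?_, ?_⟩
  · intro x hx
    rcases Finset.mem_union.mp hx with h | h
    · exact Finset.mem_union_left _ h
    · exact Finset.mem_union_right _ (hE'B h)
  · intro a ha b hb hab
    obtain ⟨haEB, hbEB, hR⟩ := hab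
    rcases Finset.mem_union.mp ha with haE | haE' <;>
      rcases Finset.mem_union.mp hb with hbE | hbE'
    · exact hE2 a haE b hbE ⟨haEB, hbEB, hR⟩
    · -- a ∈ E attacks b ∈ E' ⊆ I, so b ∈ Eplus, contradiction
      exact hnotEp b (hE'I hbE') (by
        rw [hEp]; exact Finset.mem_filter.mpr ⟨hIA (hE'I hbE'), a, haE, hR⟩)
    · -- a ∈ E' ⊆ I attacks b ∈ E, so a ∈ Eminus
      exact hnotEm a (hE'I haE') (by
        rw [hEm]; exact Finset.mem_filter.mpr ⟨hIA (hE'I haE'), b, hbE, hR⟩)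
    · exact hE'2 a haE' b hbE' ⟨hE'B' haE', hE'B' hbE', hR⟩
  · intro a ha b hba
    obtain ⟨hbEB, haEB, hR⟩ := hba
    rcases Finset.mem_union.mp ha with haE | haE'
    · obtain ⟨c, hcE, hc⟩ := hE3 a haE b ⟨hbEB, haEB, hR⟩
      exact ⟨c, Finset.mem_union_left _ hcE, hc⟩
    · rcases Finset.mem_union.mp hbEB with hbE | hbB
      · -- b ∈ E attacks a ∈ I : a ∈ Eplus, contradiction
        exact absurd (by
          rw [hEp]; exact Finset.mem_filter.mpr ⟨hIA (hE'I haE'), b, hbE, hR⟩)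
          (hnotEp a (hE'I haE'))
      · rcases Finset.mem_union.mp (hB hbB) with hbI | hbEp
        · -- b ∈ B ∩ I = B', use hadm'
          have hbB' : b ∈ B' := by rw [hB']; exact Finset.mem_inter.mpr ⟨hbB, hbI⟩
          obtain ⟨c, hcE', hc1, hc2, hc3⟩ := hE'3 a haE' b ⟨hbB', hB' ▸ hE'B' haE', hR⟩
          exact ⟨c, Finset.mem_union_right _ hcE',
            Finset.mem_union_right _ (hE'B hcE'), hbEB, hc3⟩
        · -- b ∈ Eplus: defended by E
          rw [hEp] at hbEp
          obtain ⟨_, c, hcE, hcb⟩ := Finset.mem_filter.mp hbEp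
          exact ⟨c, Finset.mem_union_left _ hcE, Finset.mem_union_left _ hcE, hbEB, hcb⟩
end

section
/- Let G = (A, R) be a finite argument graph and let E ⊆ A be conflict-free. Let E⁺ = {β ∈ A | ∃α ∈ E, (α, β) ∈ R}, E⁻ = {β ∈ A | ∃α ∈ E, (β, α) ∈ R}, and I = A \ (E ∪ E⁺ ∪ E⁻). Let B ⊆ I ∪ E⁺ and B''₂ = B ∩ (E⁺ ∩ E⁻). Then E is the grounded extension of the induced subgraph G↾(E ∪ B) if and only if E is a complete extension of G↾(E ∪ B) and E is the grounded extension of the induced subgraph G↾(E ∪ B''₂). -/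
open scoped Classical

variable {α : Type*} [DecidableEq α]

noncomputable def charF (A' : Finset α) (R : α → α → Prop) (S : Finset α) : Finset α :=
  A'.filter (fun a => Acceptable (Restrict A' R) S a)

lemma mem_charF {A' : Finset α} {R : α → α → Prop} {S : Finset α} {a : α} :
    a ∈ charF A' R S ↔ a ∈ A' ∧ Acceptable (Restrict A' R) S a := Finset.mem_filter

lemma charF_mono {A' : Finset α} {R : α → α → Prop} {S T : Finset α} (h : S ⊆ T) :
    charF A' R S ⊆ charF A' R T := by
  intro a ha
  rw [mem_charF] at *
  refine ⟨ha.1, fun b hb => ?_⟩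
  obtain ⟨c, hc, hcb⟩ := ha.2 b hb
  exact ⟨c, h hc, hcb⟩

noncomputable def iterF (A' : Finset α) (R : α → α → Prop) : ℕ → Finset α
  | 0 => ∅
  | n + 1 => charF A' R (iterF A' R n)

noncomputable def groundF (A' : Finset α) (R : α → α → Prop) : Finset α :=
  iterF A' R A'.card

lemma iterF_subset_A' (A' : Finset α) (R : α → α → Prop) : ∀ n, iterF A' R n ⊆ A'
  | 0 => Finset.empty_subset _
  | n + 1 => Finset.filter_subset _ _

lemma iterF_step_mono (A' : Finset α) (R : α → α → Prop) :
    ∀ n, iterF A' R n ⊆ iterF A' R (n + 1)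
  | 0 => Finset.empty_subset _
  | n + 1 => charF_mono (iterF_step_mono A' R n)

lemma iterF_eventually (A' : Finset α) (R : α → α → Prop) {k : ℕ}
    (h : iterF A' R k = iterF A' R (k + 1)) :
    ∀ m, k ≤ m → iterF A' R m = iterF A' R k := by
  intro m hm
  induction m with
  | zero =>
    have hk0 : k = 0 := by omega
    rw [hk0]
  | succ n ih =>
    rcases Nat.lt_or_ge k (n + 1) with h1 | h1
    · have := ih (by omega)
      show charF A' R (iterF A' R n) = iterF A' R k
      rw [this]
      exact h.symm
    · have hkn : k = n + 1 := by omega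
      rw [hkn]

lemma exists_fix (A' : Finset α) (R : α → α → Prop) :
    ∃ k ≤ A'.card, iterF A' R k = iterF A' R (k + 1) := by
  by_contra hcon
  push_neg at hcon
  have key : ∀ k, k ≤ A'.card + 1 → k ≤ (iterF A' R k).card := by
    intro k
    induction k with
    | zero => intro _; exact Nat.zero_le _
    | succ n ih =>
      intro hn
      have h1 : n ≤ A'.card := by omega
      have h2 := ih (by omega)
      have hss : iterF A' R n ⊂ iterF A' R (n + 1) :=
        lt_of_le_of_ne (iterF_step_mono A' R n) (hcon n h1)
      have := Finset.card_lt_card hss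
      omega
  have h3 := key (A'.card + 1) le_rfl
  have h4 := Finset.card_le_card (iterF_subset_A' A' R (A'.card + 1))
  omega

lemma groundF_fixed (A' : Finset α) (R : α → α → Prop) :
    charF A' R (groundF A' R) = groundF A' R := by
  obtain ⟨k, hk, hfix⟩ := exists_fix A' R
  have h1 : iterF A' R A'.card = iterF A' R k := iterF_eventually A' R hfix _ hk
  have h2 : iterF A' R (A'.card + 1) = iterF A' R k :=
    iterF_eventually A' R hfix _ (by omega)
  show iterF A' R (A'.card + 1) = groundF A' R
  rw [h2, groundF, h1]

lemma iterF_subset_groundF (A' : Finset α) (R : α → α → Prop) :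
    ∀ n, iterF A' R n ⊆ groundF A' R
  | 0 => Finset.empty_subset _
  | n + 1 => by
    show charF A' R (iterF A' R n) ⊆ groundF A' R
    calc charF A' R (iterF A' R n) ⊆ charF A' R (groundF A' R) :=
          charF_mono (iterF_subset_groundF A' R n)
      _ = groundF A' R := groundF_fixed A' R

lemma cf_charF {A' : Finset α} {R : α → α → Prop} {S : Finset α}
    (h : ConflictFree (Restrict A' R) S) :
    ConflictFree (Restrict A' R) (charF A' R S) := by
  intro a ha b hb hab
  rw [mem_charF] at ha hb
  obtain ⟨c, hcS, hca⟩ := hb.2 a hab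
  obtain ⟨d, hdS, hdc⟩ := ha.2 c hca
  exact h d hdS c hcS hdc

lemma cf_iterF (A' : Finset α) (R : α → α → Prop) :
    ∀ n, ConflictFree (Restrict A' R) (iterF A' R n)
  | 0 => fun a ha => absurd ha (Finset.notMem_empty a)
  | n + 1 => cf_charF (cf_iterF A' R n)

lemma groundF_complete (A' : Finset α) (R : α → α → Prop) :
    CompleteIn A' R (groundF A' R) := by
  refine ⟨⟨iterF_subset_A' A' R _, cf_iterF A' R _, ?_⟩, ?_⟩
  · intro a ha
    have : a ∈ charF A' R (groundF A' R) := by rw [groundF_fixed]; exact ha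
    exact (mem_charF.mp this).2
  · intro a haA hacc
    rw [← groundF_fixed A' R, mem_charF]
    exact ⟨haA, hacc⟩

lemma groundF_least {A' : Finset α} {R : α → α → Prop} {F : Finset α}
    (hF : CompleteIn A' R F) : groundF A' R ⊆ F := by
  have key : ∀ n, iterF A' R n ⊆ F := by
    intro n
    induction n with
    | zero => exact Finset.empty_subset _
    | succ n ih =>
      intro a ha
      have ha' : a ∈ charF A' R F := charF_mono ih ha
      rw [mem_charF] at ha'
      exact hF.2 a ha'.1 ha'.2
  exact key _

lemma grounded_iff_eq (A' : Finset α) (R : α → α → Prop) (E : Finset α) :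
    GroundedIn A' R E ↔ E = groundF A' R := by
  constructor
  · rintro ⟨hc, hmin⟩
    exact Finset.Subset.antisymm (hmin _ (groundF_complete A' R)) (groundF_least hc)
  · rintro rfl
    exact ⟨groundF_complete A' R, fun F hF => groundF_least hF⟩

theorem stmt7 (A : Finset α) (R : Finset (α × α)) (hRA : R ⊆ A ×ˢ A)
    (E : Finset α) (hEA : E ⊆ A)
    (hcf : ConflictFree (fun a b => (a, b) ∈ R) E)
    (Eplus Eminus I : Finset α)
    (hEp : Eplus = A.filter (fun b => ∃ a ∈ E, (a, b) ∈ R))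
    (hEm : Eminus = A.filter (fun b => ∃ a ∈ E, (b, a) ∈ R))
    (hI : I = A \ (E ∪ Eplus ∪ Eminus))
    (B B2 : Finset α) (hB : B ⊆ I ∪ Eplus) (hB2 : B2 = B ∩ (Eplus ∩ Eminus)) :
    GroundedIn (E ∪ B) (fun a b => (a, b) ∈ R) E ↔
      (CompleteIn (E ∪ B) (fun a b => (a, b) ∈ R) E ∧
        GroundedIn (E ∪ B2) (fun a b => (a, b) ∈ R) E) := by
  have hB2B : B2 ⊆ B := by rw [hB2]; exact Finset.inter_subset_left
  have hA21 : E ∪ B2 ⊆ E ∪ B := Finset.union_subset_union_right hB2B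
  -- attackers (within E ∪ B) of elements of E lie in B2
  have hK : ∀ a ∈ E, ∀ b ∈ E ∪ B, (b, a) ∈ R → b ∈ B2 := by
    intro a ha b hb hba
    have hbA : b ∈ A := (Finset.mem_product.mp (hRA hba)).1
    have hbm : b ∈ Eminus := by
      rw [hEm]; exact Finset.mem_filter.mpr ⟨hbA, a, ha, hba⟩
    rcases Finset.mem_union.mp hb with hbe | hbB
    · exact absurd hba (hcf b hbe a ha)
    · have hbp : b ∈ Eplus := by
        rcases Finset.mem_union.mp (hB hbB) with hbi | hbp
        · exfalso
          rw [hI, Finset.mem_sdiff] at hbi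
          exact hbi.2 (by simp [hbm])
        · exact hbp
      rw [hB2]
      simp [hbB, hbp, hbm]
  -- every element of B2 is attacked by E
  have hK2 : ∀ b ∈ B2, ∃ e ∈ E, (e, b) ∈ R := by
    intro b hb
    rw [hB2] at hb
    have hbp : b ∈ Eplus := (Finset.mem_inter.mp (Finset.mem_inter.mp hb).2).1
    rw [hEp, Finset.mem_filter] at hbp
    exact hbp.2
  -- E complete in E ∪ B implies E complete in E ∪ B2
  have hL1 : CompleteIn (E ∪ B) (fun a b => (a, b) ∈ R) E →
      CompleteIn (E ∪ B2) (fun a b => (a, b) ∈ R) E := by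
    rintro ⟨⟨_, _, hacc⟩, _⟩
    refine ⟨⟨Finset.subset_union_left, ?_, ?_⟩, ?_⟩
    · intro a ha b hb hab
      exact hcf a ha b hb hab.2.2
    · intro a ha b hb
      obtain ⟨c, hcE, hc⟩ := hacc a ha b ⟨hA21 hb.1, hA21 hb.2.1, hb.2.2⟩
      exact ⟨c, hcE, Finset.mem_union_left _ hcE, hb.1, hc.2.2⟩
    · intro a haA hacc'
      rcases Finset.mem_union.mp haA with haE | haB2
      · exact haE
      · exfalso
        obtain ⟨e, heE, hea⟩ := hK2 a haB2
        obtain ⟨c, hcE, hc⟩ := hacc' e ⟨Finset.mem_union_left _ heE, haA, hea⟩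
        exact hcf c hcE e heE hc.2.2
  -- forward core induction
  have hfwd : E = groundF (E ∪ B) (fun a b => (a, b) ∈ R) →
      ∀ n, iterF (E ∪ B) (fun a b => (a, b) ∈ R) n ∩ E ⊆
        groundF (E ∪ B2) (fun a b => (a, b) ∈ R) := by
    intro hEg n
    induction n with
    | zero =>
      intro a ha
      exact absurd (Finset.mem_inter.mp ha).1 (Finset.notMem_empty a)
    | succ n ih =>
      intro a ha
      obtain ⟨ha1, haE⟩ := Finset.mem_inter.mp ha
      have ha1' : a ∈ charF (E ∪ B) (fun a b => (a, b) ∈ R)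
          (iterF (E ∪ B) (fun a b => (a, b) ∈ R) n) := ha1
      rw [mem_charF] at ha1'
      rw [← groundF_fixed (E ∪ B2) (fun a b => (a, b) ∈ R), mem_charF]
      refine ⟨Finset.mem_union_left _ haE, ?_⟩
      intro b hb
      obtain ⟨c, hcS, hc1⟩ := ha1'.2 b ⟨hA21 hb.1, hA21 hb.2.1, hb.2.2⟩
      have hcE : c ∈ E := by
        have hcg := iterF_subset_groundF (E ∪ B) (fun a b => (a, b) ∈ R) n hcS
        rwa [← hEg] at hcg
      exact ⟨c, ih (Finset.mem_inter.mpr ⟨hcS, hcE⟩),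
        Finset.mem_union_left _ hcE, hb.1, hc1.2.2⟩
  -- backward core induction
  have hbwd : E = groundF (E ∪ B2) (fun a b => (a, b) ∈ R) →
      ∀ n, iterF (E ∪ B2) (fun a b => (a, b) ∈ R) n ⊆
        groundF (E ∪ B) (fun a b => (a, b) ∈ R) := by
    intro hg n
    induction n with
    | zero => exact Finset.empty_subset _
    | succ n ih =>
      intro a ha
      have ha' : a ∈ charF (E ∪ B2) (fun a b => (a, b) ∈ R)
          (iterF (E ∪ B2) (fun a b => (a, b) ∈ R) n) := ha
      rw [mem_charF] at ha'
      have haE : a ∈ E := by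
        have := iterF_subset_groundF (E ∪ B2) (fun a b => (a, b) ∈ R) (n + 1) ha
        rwa [← hg] at this
      rw [← groundF_fixed (E ∪ B) (fun a b => (a, b) ∈ R), mem_charF]
      refine ⟨Finset.mem_union_left _ haE, ?_⟩
      intro b hb
      have hbB2 : b ∈ B2 := hK a haE b hb.1 hb.2.2
      have hbA2 : b ∈ E ∪ B2 := Finset.mem_union_right _ hbB2
      obtain ⟨c, hcS, hc⟩ := ha'.2 b ⟨hbA2, Finset.mem_union_left _ haE, hb.2.2⟩
      exact ⟨c, ih hcS, hA21 hc.1, hb.1, hc.2.2⟩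
  rw [grounded_iff_eq, grounded_iff_eq]
  constructor
  · intro hEg
    have hc1 : CompleteIn (E ∪ B) (fun a b => (a, b) ∈ R) E :=
      ((grounded_iff_eq (E ∪ B) (fun a b => (a, b) ∈ R) E).mpr hEg).1
    refine ⟨hc1, ?_⟩
    apply Finset.Subset.antisymm
    · intro a haE
      have haI : a ∈ iterF (E ∪ B) (fun a b => (a, b) ∈ R) ((E ∪ B).card) := by
        show a ∈ groundF (E ∪ B) (fun a b => (a, b) ∈ R)
        rwa [← hEg]
      exact hfwd hEg _ (Finset.mem_inter.mpr ⟨haI, haE⟩)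
    · exact groundF_least (hL1 hc1)
  · rintro ⟨hc, hg⟩
    apply Finset.Subset.antisymm
    · intro a haE
      have : a ∈ iterF (E ∪ B2) (fun a b => (a, b) ∈ R) ((E ∪ B2).card) := by
        show a ∈ groundF (E ∪ B2) (fun a b => (a, b) ∈ R)
        rwa [← hg]
      exact hbwd hg _ this
    · exact groundF_least hc
end

section
/- Let G^p = (A, R, p) be a finite probabilistic argument graph with p : A → [0,1], and let E ⊆ A be conflict-free. Let E⁺ = {β ∈ A | ∃α ∈ E, (α, β) ∈ R} and E⁻ = {β ∈ A | ∃α ∈ E, (β, α) ∈ R}. Then the probability that E is an admissible extension satisfies p(E^ad) = (Π_{α ∈ E} p(α)) · (Π_{β ∈ E⁻ \ E⁺} (1 − p(β))), where p(E^ad) = Σ_{A' ⊆ A, E is an admissible set of G↾A'} (Π_{α ∈ A'} p(α)) · (Π_{α ∈ A \ A'} (1 − p(α))). -/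
open scoped Classical

variable {α : Type*} [DecidableEq α]

theorem stmt8 (A : Finset α) (R : Finset (α × α)) (hRA : R ⊆ A ×ˢ A)
    (p : α → ℝ) (hp : ∀ a ∈ A, 0 ≤ p a ∧ p a ≤ 1)
    (E : Finset α) (hEA : E ⊆ A)
    (hcf : ConflictFree (fun a b => (a, b) ∈ R) E)
    (Eplus Eminus : Finset α)
    (hEp : Eplus = A.filter (fun b => ∃ a ∈ E, (a, b) ∈ R))
    (hEm : Eminus = A.filter (fun b => ∃ a ∈ E, (b, a) ∈ R)) :
    ∑ A' ∈ A.powerset.filter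
        (fun A' => AdmissibleIn A' (fun a b => (a, b) ∈ R) E),
        (∏ a ∈ A', p a) * ∏ a ∈ A \ A', (1 - p a)
      = (∏ a ∈ E, p a) * ∏ b ∈ Eminus \ Eplus, (1 - p b) := by

  classical
  set D := Eminus \ Eplus with hD
  set T := A \ (E ∪ D) with hT
  have hDA : D ⊆ A := by
    intro x hx
    rw [hD, hEm] at hx
    exact (Finset.mem_filter.mp (Finset.mem_sdiff.mp hx).1).1
  have hED : Disjoint E D := by
    rw [Finset.disjoint_left]
    intro a haE haD
    rw [hD, hEm] at haD
    obtain ⟨hmem, -⟩ := Finset.mem_sdiff.mp haD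
    obtain ⟨-, b, hbE, hR⟩ := Finset.mem_filter.mp hmem
    exact hcf a haE b hbE hR
  have hTE : Disjoint T E := by
    rw [Finset.disjoint_left]
    intro x hx hxE
    rw [hT] at hx
    exact (Finset.mem_sdiff.mp hx).2 (Finset.mem_union_left _ hxE)
  have hTD : Disjoint T D := by
    rw [Finset.disjoint_left]
    intro x hx hxD
    rw [hT] at hx
    exact (Finset.mem_sdiff.mp hx).2 (Finset.mem_union_right _ hxD)
  -- characterization of admissibility
  have hchar : ∀ A' ∈ A.powerset,
      (AdmissibleIn A' (fun a b => (a, b) ∈ R) E ↔ (E ⊆ A' ∧ Disjoint A' D)) := by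
    intro A' hA'
    rw [Finset.mem_powerset] at hA'
    constructor
    · rintro ⟨hEsub, -, hacc⟩
      refine ⟨hEsub, ?_⟩
      rw [Finset.disjoint_left]
      intro b hbA' hbD
      rw [hD] at hbD
      obtain ⟨hbm, hbp⟩ := Finset.mem_sdiff.mp hbD
      rw [hEm] at hbm
      obtain ⟨hbA, a, haE, hR⟩ := Finset.mem_filter.mp hbm
      obtain ⟨c, hcE, hcA', hbA'2, hcb⟩ := hacc a haE b ⟨hbA', hEsub haE, hR⟩
      exact hbp (by rw [hEp]; exact Finset.mem_filter.mpr ⟨hbA, c, hcE, hcb⟩)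
    · rintro ⟨hEsub, hdisj⟩
      refine ⟨hEsub, ?_, ?_⟩
      · intro a haE b hbE hRab
        exact hcf a haE b hbE hRab.2.2
      · intro a haE b hb
        obtain ⟨hbA', -, hRba⟩ := hb
        have hbA : b ∈ A := hA' hbA'
        have hbm : b ∈ Eminus := by
          rw [hEm]; exact Finset.mem_filter.mpr ⟨hbA, a, haE, hRba⟩
        have hbp : b ∈ Eplus := by
          by_contra hbp
          exact (Finset.disjoint_left.mp hdisj hbA')
            (by rw [hD]; exact Finset.mem_sdiff.mpr ⟨hbm, hbp⟩)
        rw [hEp] at hbp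
        obtain ⟨-, c, hcE, hcb⟩ := Finset.mem_filter.mp hbp
        exact ⟨c, hcE, hEsub hcE, hbA', hcb⟩
  -- the filtered powerset equals the image of T.powerset under (E ∪ ·)
  have hset : A.powerset.filter
      (fun A' => AdmissibleIn A' (fun a b => (a, b) ∈ R) E)
      = T.powerset.image (fun S => E ∪ S) := by
    ext A'
    simp only [Finset.mem_filter, Finset.mem_image, Finset.mem_powerset]
    constructor
    · rintro ⟨hA'A, hadm⟩
      obtain ⟨hEsub, hdisj⟩ := (hchar A' (Finset.mem_powerset.mpr hA'A)).mp hadm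
      refine ⟨A' \ E, ?_, ?_⟩
      · intro x hx
        obtain ⟨hxA', hxE⟩ := Finset.mem_sdiff.mp hx
        rw [hT]
        refine Finset.mem_sdiff.mpr ⟨hA'A hxA', ?_⟩
        intro hx2
        rcases Finset.mem_union.mp hx2 with h | h
        · exact hxE h
        · exact Finset.disjoint_left.mp hdisj hxA' h
      · rw [Finset.union_sdiff_of_subset hEsub]
    · rintro ⟨S, hST, rfl⟩
      have hsub : E ∪ S ⊆ A := by
        intro x hx
        rcases Finset.mem_union.mp hx with h | h
        · exact hEA h
        · exact (Finset.mem_sdiff.mp (hST h)).1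
      refine ⟨hsub, (hchar _ (Finset.mem_powerset.mpr hsub)).mpr
        ⟨Finset.subset_union_left, ?_⟩⟩
      rw [Finset.disjoint_left]
      intro x hx hxD
      rcases Finset.mem_union.mp hx with h | h
      · exact Finset.disjoint_left.mp hED h hxD
      · exact Finset.disjoint_left.mp hTD (hST h) hxD
  rw [hset]
  have hinj : ∀ S₁ ∈ T.powerset, ∀ S₂ ∈ T.powerset,
      E ∪ S₁ = E ∪ S₂ → S₁ = S₂ := by
    intro S₁ h₁ S₂ h₂ heq
    rw [Finset.mem_powerset] at h₁ h₂
    have d₁ : Disjoint E S₁ := (hTE.mono_left h₁).symm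
    have d₂ : Disjoint E S₂ := (hTE.mono_left h₂).symm
    have := congrArg (fun X => X \ E) heq
    simpa [Finset.union_sdiff_of_subset, Finset.sdiff_eq_self_of_disjoint d₁.symm,
      Finset.sdiff_eq_self_of_disjoint d₂.symm, Finset.union_sdiff_distrib] using this
  rw [Finset.sum_image hinj]
  have hterm : ∀ S ∈ T.powerset,
      (∏ a ∈ E ∪ S, p a) * ∏ a ∈ A \ (E ∪ S), (1 - p a)
      = ((∏ a ∈ E, p a) * ∏ b ∈ D, (1 - p b))
        * ((∏ a ∈ S, p a) * ∏ a ∈ T \ S, (1 - p a)) := by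
    intro S hS
    rw [Finset.mem_powerset] at hS
    have dES : Disjoint E S := (hTE.mono_left hS).symm
    have hcomp : A \ (E ∪ S) = D ∪ (T \ S) := by
      ext x
      simp only [Finset.mem_sdiff, Finset.mem_union, hT, not_or]
      constructor
      · rintro ⟨hxA, hxE, hxS⟩
        by_cases hxD : x ∈ D
        · exact Or.inl hxD
        · exact Or.inr ⟨⟨hxA, by tauto⟩, hxS⟩
      · rintro (hxD | ⟨⟨hxA, hxn⟩, hxS⟩)
        · exact ⟨hDA hxD, Finset.disjoint_right.mp hED hxD,
            Finset.disjoint_right.mp (hTD.symm.mono_right hS).symm hxD⟩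
        · exact ⟨hxA, by tauto, hxS⟩
    have dDTS : Disjoint D (T \ S) := (hTD.symm.mono_right Finset.sdiff_subset)
    rw [Finset.prod_union dES, hcomp, Finset.prod_union dDTS]
    ring
  rw [Finset.sum_congr rfl hterm, ← Finset.mul_sum]
  have hsum : ∑ S ∈ T.powerset, (∏ a ∈ S, p a) * ∏ a ∈ T \ S, (1 - p a) = 1 := by
    rw [← Finset.prod_add]
    simp
  rw [hsum, mul_one]
end

section
/- Let G^p = (A, R, p) be a finite probabilistic argument graph with p : A → [0,1], and let E ⊆ A be conflict-free. Let E⁺ = {β ∈ A | ∃α ∈ E, (α, β) ∈ R}, E⁻ = {β ∈ A | ∃α ∈ E, (β, α) ∈ R}, and I = A \ (E ∪ E⁺ ∪ E⁻). Then the probability that E is a stable extension satisfies p(E^st) = (Π_{α ∈ E} p(α)) · (Π_{β ∈ I ∪ (E⁻ \ E⁺)} (1 − p(β))), where p(E^st) = Σ_{A' ⊆ A, E is a stable extension of G↾A'} (Π_{α ∈ A'} p(α)) · (Π_{α ∈ A \ A'} (1 − p(α))). -/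
open scoped Classical

variable {α : Type*} [DecidableEq α]

theorem stmt9 (A : Finset α) (R : Finset (α × α)) (hRA : R ⊆ A ×ˢ A)
    (p : α → ℝ) (hp : ∀ a ∈ A, 0 ≤ p a ∧ p a ≤ 1)
    (E : Finset α) (hEA : E ⊆ A)
    (hcf : ConflictFree (fun a b => (a, b) ∈ R) E)
    (Eplus Eminus I : Finset α)
    (hEp : Eplus = A.filter (fun b => ∃ a ∈ E, (a, b) ∈ R))
    (hEm : Eminus = A.filter (fun b => ∃ a ∈ E, (b, a) ∈ R))
    (hI : I = A \ (E ∪ Eplus ∪ Eminus)) :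
    ∑ A' ∈ A.powerset.filter
        (fun A' => StableIn A' (fun a b => (a, b) ∈ R) E),
        (∏ a ∈ A', p a) * ∏ a ∈ A \ A', (1 - p a)
      = (∏ a ∈ E, p a) * ∏ b ∈ I ∪ (Eminus \ Eplus), (1 - p b) := by
  classical
  have hEpA : Eplus ⊆ A := by rw [hEp]; exact Finset.filter_subset _ _
  have hdisjE : Disjoint E Eplus := by
    rw [Finset.disjoint_left]
    intro a haE haP
    rw [hEp, Finset.mem_filter] at haP
    obtain ⟨_, c, hc, hR⟩ := haP
    exact hcf c hc a haE hR
  have hdisjP : Disjoint Eplus (I ∪ (Eminus \ Eplus)) := by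
    rw [Finset.disjoint_left]
    intro a haP haU
    rcases Finset.mem_union.1 haU with h | h
    · rw [hI, Finset.mem_sdiff] at h
      exact h.2 (by simp [haP])
    · exact (Finset.mem_sdiff.1 h).2 haP
  have hsplit : ∀ S ⊆ Eplus, A \ (E ∪ S) = (Eplus \ S) ∪ (I ∪ (Eminus \ Eplus)) := by
    intro S hS
    ext a
    have h1 : a ∈ Eplus ↔ a ∈ A ∧ ∃ c ∈ E, (c, a) ∈ R := by rw [hEp, Finset.mem_filter]
    have h2 : a ∈ Eminus ↔ a ∈ A ∧ ∃ c ∈ E, (a, c) ∈ R := by rw [hEm, Finset.mem_filter]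
    have h3 : a ∈ I ↔ a ∈ A ∧ ¬(a ∈ E ∨ a ∈ Eplus ∨ a ∈ Eminus) := by
      rw [hI]; simp [Finset.mem_sdiff, Finset.mem_union, or_assoc]
    have hcfa : a ∈ E → ¬ ∃ c ∈ E, (c, a) ∈ R := by
      rintro hE ⟨c, hc, hR⟩; exact hcf c hc a hE hR
    have hcfa' : a ∈ E → ¬ ∃ c ∈ E, (a, c) ∈ R := by
      rintro hE ⟨c, hc, hR⟩; exact hcf a hE c hc hR
    have hSP : a ∈ S → a ∈ A ∧ ∃ c ∈ E, (c, a) ∈ R := fun h => h1.1 (hS h)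
    simp only [Finset.mem_sdiff, Finset.mem_union, h3, h1, h2]
    constructor
    · rintro ⟨haA, hn⟩
      rw [not_or] at hn
      by_cases hPc : ∃ c ∈ E, (c, a) ∈ R
      · exact Or.inl ⟨⟨haA, hPc⟩, hn.2⟩
      · by_cases hQc : ∃ c ∈ E, (a, c) ∈ R
        · exact Or.inr (Or.inr ⟨⟨haA, hQc⟩, fun h => hPc h.2⟩)
        · refine Or.inr (Or.inl ⟨haA, ?_⟩)
          rintro (h | h | h)
          · exact hn.1 h
          · exact hPc h.2
          · exact hQc h.2
    · rintro (⟨⟨haA, hPc⟩, hnS⟩ | ⟨haA, hn⟩ | ⟨⟨haA, hQc⟩, hnP⟩)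
      · refine ⟨haA, ?_⟩
        rintro (h | h)
        · exact hcfa h hPc
        · exact hnS h
      · refine ⟨haA, ?_⟩
        rintro (h | h)
        · exact hn (Or.inl h)
        · exact hn (Or.inr (Or.inl ⟨haA, (hSP h).2⟩))
      · refine ⟨haA, ?_⟩
        rintro (h | h)
        · exact hcfa' h hQc
        · exact hnP ⟨haA, (hSP h).2⟩
  have hset : A.powerset.filter (fun A' => StableIn A' (fun a b => (a, b) ∈ R) E)
      = Eplus.powerset.image (fun S => E ∪ S) := by
    ext A'
    simp only [Finset.mem_filter, Finset.mem_powerset, Finset.mem_image]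
    constructor
    · rintro ⟨hA'A, hE, _, hstab⟩
      refine ⟨A' \ E, fun a ha => ?_, ?_⟩
      · rw [Finset.mem_sdiff] at ha
        obtain ⟨c, hc, hcA', haA', hR⟩ := hstab a ha.1 ha.2
        rw [hEp, Finset.mem_filter]
        exact ⟨hA'A ha.1, c, hc, hR⟩
      · rw [Finset.union_sdiff_of_subset hE]
    · rintro ⟨S, hS, rfl⟩
      refine ⟨Finset.union_subset hEA (hS.trans hEpA), Finset.subset_union_left, ?_, ?_⟩
      · intro a ha b hb hr; exact hcf a ha b hb hr.2.2
      · intro a haU haE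
        rcases Finset.mem_union.1 haU with h | h
        · exact absurd h haE
        · have := hS h
          rw [hEp, Finset.mem_filter] at this
          obtain ⟨_, c, hc, hR⟩ := this
          exact ⟨c, hc, Finset.mem_union_left _ hc, haU, hR⟩
  have hinj : ∀ S ∈ Eplus.powerset, ∀ T ∈ Eplus.powerset,
      E ∪ S = E ∪ T → S = T := by
    intro S hS T hT h
    rw [Finset.mem_powerset] at hS hT
    have hds : Disjoint E S := hdisjE.mono_right hS
    have hdt : Disjoint E T := hdisjE.mono_right hT
    rw [← Finset.union_sdiff_cancel_left hds, h, Finset.union_sdiff_cancel_left hdt]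
  rw [hset, Finset.sum_image hinj]
  have hterm : ∀ S ∈ Eplus.powerset,
      (∏ a ∈ E ∪ S, p a) * ∏ a ∈ A \ (E ∪ S), (1 - p a)
      = ((∏ a ∈ E, p a) * ∏ b ∈ I ∪ (Eminus \ Eplus), (1 - p b)) *
        ((∏ a ∈ S, p a) * ∏ a ∈ Eplus \ S, (1 - p a)) := by
    intro S hS
    rw [Finset.mem_powerset] at hS
    rw [Finset.prod_union (hdisjE.mono_right hS), hsplit S hS,
      Finset.prod_union (hdisjP.mono_left Finset.sdiff_subset)]
    ring
  rw [Finset.sum_congr rfl hterm, ← Finset.mul_sum]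
  have hsum : ∑ S ∈ Eplus.powerset, (∏ a ∈ S, p a) * ∏ a ∈ Eplus \ S, (1 - p a) = 1 := by
    rw [← Finset.prod_add]
    simp
  rw [hsum, mul_one]
end

section
/- Let G^p = (A, R, p) be a finite probabilistic argument graph with p : A → [0,1], and let E ⊆ A be conflict-free. Let E⁺ = {β ∈ A | ∃α ∈ E, (α, β) ∈ R}, E⁻ = {β ∈ A | ∃α ∈ E, (β, α) ∈ R}, and I = A \ (E ∪ E⁺ ∪ E⁻). Then the probability that E is a complete extension satisfies p(E^co) = P_E · P_{I_CO}, where P_E = (Π_{α ∈ E} p(α)) · (Π_{β ∈ E⁻ \ E⁺} (1 − p(β))) and P_{I_CO} = Σ over all B' ⊆ I such that for every α ∈ B' the set {β ∈ A | (β, α) ∈ R} ∩ B' is nonempty, of (Π_{γ ∈ B'} p(γ)) · (Π_{ξ ∈ I \ B'} (1 − p(ξ))); here p(E^co) = Σ_{A' ⊆ A, E is a complete extension of G↾A'} (Π_{α ∈ A'} p(α)) · (Π_{α ∈ A \ A'} (1 − p(α))). -/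
open scoped Classical

variable {α : Type*} [DecidableEq α]

set_option maxHeartbeats 2000000 in
theorem stmt10 (A : Finset α) (R : Finset (α × α)) (hRA : R ⊆ A ×ˢ A)
    (p : α → ℝ) (hp : ∀ a ∈ A, 0 ≤ p a ∧ p a ≤ 1)
    (E : Finset α) (hEA : E ⊆ A)
    (hcf : ConflictFree (fun a b => (a, b) ∈ R) E)
    (Eplus Eminus I : Finset α)
    (hEp : Eplus = A.filter (fun b => ∃ a ∈ E, (a, b) ∈ R))
    (hEm : Eminus = A.filter (fun b => ∃ a ∈ E, (b, a) ∈ R))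
    (hI : I = A \ (E ∪ Eplus ∪ Eminus)) :
    ∑ A' ∈ A.powerset.filter
        (fun A' => CompleteIn A' (fun a b => (a, b) ∈ R) E),
        (∏ a ∈ A', p a) * ∏ a ∈ A \ A', (1 - p a)
      = ((∏ a ∈ E, p a) * ∏ b ∈ Eminus \ Eplus, (1 - p b)) *
        ∑ B' ∈ I.powerset.filter
            (fun B' => ∀ a ∈ B', ((A.filter (fun b => (b, a) ∈ R)) ∩ B').Nonempty),
            (∏ c ∈ B', p c) * ∏ x ∈ I \ B', (1 - p x) := by
  classical
  have hKmem : ∀ b, b ∈ Eplus ↔ b ∈ A ∧ ∃ a ∈ E, (a, b) ∈ R := by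
    intro b; rw [hEp]; simp
  have hMmem : ∀ b, b ∈ Eminus ↔ b ∈ A ∧ ∃ a ∈ E, (b, a) ∈ R := by
    intro b; rw [hEm]; simp
  have hImem : ∀ b, b ∈ I ↔ b ∈ A ∧ b ∉ E ∧ b ∉ Eplus ∧ b ∉ Eminus := by
    intro b; rw [hI]
    simp only [Finset.mem_sdiff, Finset.mem_union]
    tauto
  have hEK : ∀ b, b ∈ E → b ∉ Eplus := by
    intro b hb hbK
    obtain ⟨-, a, ha, har⟩ := (hKmem b).1 hbK
    exact hcf a ha b hb har
  have hEM : ∀ b, b ∈ E → b ∉ Eminus := by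
    intro b hb hbM
    obtain ⟨-, a, ha, har⟩ := (hMmem b).1 hbM
    exact hcf b hb a ha har
  have hKA : ∀ b, b ∈ Eplus → b ∈ A := fun b hb => ((hKmem b).1 hb).1
  have hMA : ∀ b, b ∈ Eminus → b ∈ A := fun b hb => ((hMmem b).1 hb).1
  have hIA : ∀ b, b ∈ I → b ∈ A := fun b hb => ((hImem b).1 hb).1
  have hclass : ∀ x ∈ A, x ∈ E ∨ x ∈ Eplus ∨ (x ∈ Eminus ∧ x ∉ Eplus) ∨ x ∈ I := by
    intro x hx
    by_cases h1 : x ∈ E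
    · exact Or.inl h1
    by_cases h2 : x ∈ Eplus
    · exact Or.inr (Or.inl h2)
    by_cases h3 : x ∈ Eminus
    · exact Or.inr (Or.inr (Or.inl ⟨h3, h2⟩))
    · exact Or.inr (Or.inr (Or.inr ((hImem x).2 ⟨hx, h1, h2, h3⟩)))
  -- characterization of valid A'
  have char : ∀ A' : Finset α, A' ⊆ A →
      (CompleteIn A' (fun a b => (a, b) ∈ R) E ↔
        E ⊆ A' ∧ A' ∩ (Eminus \ Eplus) = ∅ ∧
          ∀ a ∈ A' ∩ I, ∃ b ∈ A' ∩ I, (b, a) ∈ R) := by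
    intro A' hA'
    constructor
    · rintro ⟨⟨hEA', -, hacc⟩, hcomp⟩
      have hM0 : A' ∩ (Eminus \ Eplus) = ∅ := by
        rw [Finset.eq_empty_iff_forall_notMem]
        intro b hb
        rw [Finset.mem_inter, Finset.mem_sdiff] at hb
        obtain ⟨hbA', hbM, hbK⟩ := hb
        obtain ⟨-, a, haE, har⟩ := (hMmem b).1 hbM
        obtain ⟨c, hcE, -, -, hcb⟩ := hacc a haE b ⟨hbA', hEA' haE, har⟩
        exact hbK ((hKmem b).2 ⟨hA' hbA', c, hcE, hcb⟩)
      refine ⟨hEA', hM0, ?_⟩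
      intro a ha
      rw [Finset.mem_inter] at ha
      obtain ⟨haA', haI⟩ := ha
      by_contra hno
      push_neg at hno
      have hacc' : Acceptable (Restrict A' (fun a b => (a, b) ∈ R)) E a := by
        rintro b ⟨hbA', haA2, hba⟩
        by_cases hbK : b ∈ Eplus
        · obtain ⟨-, c, hcE, hcb⟩ := (hKmem b).1 hbK
          exact ⟨c, hcE, hEA' hcE, hbA', hcb⟩
        · exfalso
          by_cases hbE : b ∈ E
          · exact ((hImem a).1 haI).2.2.1 ((hKmem a).2 ⟨hA' haA', b, hbE, hba⟩)
          by_cases hbM : b ∈ Eminus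
          · have : b ∈ A' ∩ (Eminus \ Eplus) :=
              Finset.mem_inter.2 ⟨hbA', Finset.mem_sdiff.2 ⟨hbM, hbK⟩⟩
            rw [hM0] at this
            exact absurd this (Finset.notMem_empty b)
          · have hbI : b ∈ I := (hImem b).2 ⟨hA' hbA', hbE, hbK, hbM⟩
            exact hno b (Finset.mem_inter.2 ⟨hbA', hbI⟩) hba
      exact ((hImem a).1 haI).2.1 (hcomp a haA' hacc')
    · rintro ⟨hEA', hM0, hIcond⟩
      have hnotM : ∀ b ∈ A', b ∈ Eminus → b ∈ Eplus := by
        intro b hbA' hbM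
        by_contra hbK
        have : b ∈ A' ∩ (Eminus \ Eplus) :=
          Finset.mem_inter.2 ⟨hbA', Finset.mem_sdiff.2 ⟨hbM, hbK⟩⟩
        rw [hM0] at this
        exact absurd this (Finset.notMem_empty b)
      have haccE : ∀ a ∈ E, Acceptable (Restrict A' (fun a b => (a, b) ∈ R)) E a := by
        rintro a haE b ⟨hbA', -, hba⟩
        have hbM : b ∈ Eminus := (hMmem b).2 ⟨hA' hbA', a, haE, hba⟩
        obtain ⟨-, c, hcE, hcb⟩ := (hKmem b).1 (hnotM b hbA' hbM)
        exact ⟨c, hcE, hEA' hcE, hbA', hcb⟩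
      refine ⟨⟨hEA', ?_, haccE⟩, ?_⟩
      · rintro a ha b hb ⟨-, -, hr⟩
        exact hcf a ha b hb hr
      · intro a haA' hacc
        by_contra haE
        by_cases hbK : a ∈ Eplus
        · obtain ⟨-, c, hcE, hca⟩ := (hKmem a).1 hbK
          obtain ⟨d, hdE, -, -, hdc⟩ := hacc c ⟨hEA' hcE, haA', hca⟩
          exact hcf d hdE c hcE hdc
        by_cases hbM : a ∈ Eminus
        · exact hbK (hnotM a haA' hbM)
        · have haI : a ∈ I := (hImem a).2 ⟨hA' haA', haE, hbK, hbM⟩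
          obtain ⟨b, hb, hba⟩ := hIcond a (Finset.mem_inter.2 ⟨haA', haI⟩)
          rw [Finset.mem_inter] at hb
          obtain ⟨c, hcE, -, -, hcb⟩ := hacc b ⟨hb.1, haA', hba⟩
          exact ((hImem b).1 hb.2).2.2.1 ((hKmem b).2 ⟨hIA b hb.2, c, hcE, hcb⟩)
  -- the product index set
  set filt := I.powerset.filter
      (fun B' => ∀ a ∈ B', ((A.filter (fun b => (b, a) ∈ R)) ∩ B').Nonempty) with hfilt
  set g : Finset α × Finset α → ℝ := fun q =>
    (((∏ a ∈ E, p a) * ∏ a ∈ q.1, p a) * ∏ c ∈ q.2, p c) *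
      (((∏ b ∈ Eminus \ Eplus, (1 - p b)) * ∏ a ∈ Eplus \ q.1, (1 - p a)) *
        ∏ x ∈ I \ q.2, (1 - p x)) with hg
  have hleftinv : ∀ A' : Finset α, A' ⊆ A → E ⊆ A' → A' ∩ (Eminus \ Eplus) = ∅ →
      E ∪ A' ∩ Eplus ∪ A' ∩ I = A' := by
    intro A' hA' hEA' hM0
    have hM0' : ∀ x, ¬(x ∈ A' ∧ x ∈ Eminus ∧ x ∉ Eplus) := by
      intro x hx
      have : x ∈ A' ∩ (Eminus \ Eplus) := by
        rw [Finset.mem_inter, Finset.mem_sdiff]; tauto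
      rw [hM0] at this
      exact absurd this (Finset.notMem_empty x)
    ext x
    have h9 : x ∈ A' → x ∈ E ∨ x ∈ Eplus ∨ (x ∈ Eminus ∧ x ∉ Eplus) ∨ x ∈ I :=
      fun h => hclass x (hA' h)
    have hE' : x ∈ E → x ∈ A' := fun h => hEA' h
    have h10 := hM0' x
    simp only [Finset.mem_union, Finset.mem_inter]
    tauto
  have hcompl : ∀ S B' : Finset α, S ⊆ Eplus → B' ⊆ I →
      A \ (E ∪ S ∪ B') = Eminus \ Eplus ∪ (Eplus \ S) ∪ (I \ B') := by
    intro S B' hS hB'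
    ext x
    have h1 : x ∈ E → x ∉ Eplus := hEK x
    have h2 : x ∈ E → x ∉ Eminus := hEM x
    have h3 : x ∈ I → x ∈ A ∧ x ∉ E ∧ x ∉ Eplus ∧ x ∉ Eminus := fun h => (hImem x).1 h
    have h4 : x ∈ Eplus → x ∈ A := hKA x
    have h5 : x ∈ Eminus → x ∈ A := hMA x
    have h6 : x ∈ E → x ∈ A := fun h => hEA h
    have h7 : x ∈ S → x ∈ Eplus := fun h => hS h
    have h8 : x ∈ B' → x ∈ I := fun h => hB' h
    have h9 := hclass x
    simp only [Finset.mem_sdiff, Finset.mem_union]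
    tauto
  have key : (∑ A' ∈ A.powerset.filter
        (fun A' => CompleteIn A' (fun a b => (a, b) ∈ R) E),
        (∏ a ∈ A', p a) * ∏ a ∈ A \ A', (1 - p a))
      = ∑ q ∈ Eplus.powerset ×ˢ filt, g q := by
    refine Finset.sum_nbij' (i := fun A' => (A' ∩ Eplus, A' ∩ I))
      (j := fun q => E ∪ q.1 ∪ q.2) ?_ ?_ ?_ ?_ ?_
    · intro A' hA'
      rw [Finset.mem_filter, Finset.mem_powerset] at hA'
      obtain ⟨hA'A, hcomp⟩ := hA'
      obtain ⟨hEA', hM0, hIcond⟩ := (char A' hA'A).1 hcomp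
      rw [Finset.mem_product]
      constructor
      · rw [Finset.mem_powerset]; exact Finset.inter_subset_right
      · rw [hfilt, Finset.mem_filter, Finset.mem_powerset]
        refine ⟨Finset.inter_subset_right, ?_⟩
        intro a ha
        obtain ⟨b, hb, hba⟩ := hIcond a ha
        exact ⟨b, Finset.mem_inter.2 ⟨Finset.mem_filter.2
          ⟨hIA b (Finset.mem_inter.1 hb).2, hba⟩, hb⟩⟩
    · intro q hq
      rw [Finset.mem_product, Finset.mem_powerset, hfilt, Finset.mem_filter,
        Finset.mem_powerset] at hq
      obtain ⟨hS, hB', hcond⟩ := hq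
      have hsub : E ∪ q.1 ∪ q.2 ⊆ A := by
        intro x hx
        rw [Finset.mem_union, Finset.mem_union] at hx
        rcases hx with (hx | hx) | hx
        · exact hEA hx
        · exact hKA x (hS hx)
        · exact hIA x (hB' hx)
      rw [Finset.mem_filter, Finset.mem_powerset]
      refine ⟨hsub, (char _ hsub).2 ⟨?_, ?_, ?_⟩⟩
      · intro x hx
        exact Finset.mem_union.2 (Or.inl (Finset.mem_union.2 (Or.inl hx)))
      · rw [Finset.eq_empty_iff_forall_notMem]
        intro x hx
        rw [Finset.mem_inter, Finset.mem_union, Finset.mem_union, Finset.mem_sdiff] at hx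
        obtain ⟨hx1, hxM, hxK⟩ := hx
        rcases hx1 with (hx | hx) | hx
        · exact hEM x hx hxM
        · exact hxK (hS hx)
        · exact ((hImem x).1 (hB' hx)).2.2.2 hxM
      · intro a ha
        rw [Finset.mem_inter, Finset.mem_union, Finset.mem_union] at ha
        obtain ⟨ha1, haI⟩ := ha
        have haB : a ∈ q.2 := by
          rcases ha1 with (hx | hx) | hx
          · exact absurd hx ((hImem a).1 haI).2.1
          · exact absurd (hS hx) ((hImem a).1 haI).2.2.1
          · exact hx
        obtain ⟨b, hb⟩ := hcond a haB
        rw [Finset.mem_inter, Finset.mem_filter] at hb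
        refine ⟨b, ?_, hb.1.2⟩
        rw [Finset.mem_inter, Finset.mem_union, Finset.mem_union]
        exact ⟨Or.inr hb.2, hB' hb.2⟩
    · intro A' hA'
      rw [Finset.mem_filter, Finset.mem_powerset] at hA'
      obtain ⟨hEA', hM0, -⟩ := (char A' hA'.1).1 hA'.2
      exact hleftinv A' hA'.1 hEA' hM0
    · intro q hq
      rw [Finset.mem_product, Finset.mem_powerset, hfilt, Finset.mem_filter,
        Finset.mem_powerset] at hq
      obtain ⟨hS, hB', -⟩ := hq
      have e1 : (E ∪ q.1 ∪ q.2) ∩ Eplus = q.1 := by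
        ext x
        have h1 : x ∈ E → x ∉ Eplus := hEK x
        have h7 : x ∈ q.1 → x ∈ Eplus := fun h => hS h
        have h8 : x ∈ q.2 → x ∉ Eplus := fun h => ((hImem x).1 (hB' h)).2.2.1
        simp only [Finset.mem_inter, Finset.mem_union]
        tauto
      have e2 : (E ∪ q.1 ∪ q.2) ∩ I = q.2 := by
        ext x
        have h1 : x ∈ I → x ∉ E := fun h => ((hImem x).1 h).2.1
        have h7 : x ∈ q.1 → x ∉ I := fun h hI' => ((hImem x).1 hI').2.2.1 (hS h)
        have h8 : x ∈ q.2 → x ∈ I := fun h => hB' h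
        simp only [Finset.mem_inter, Finset.mem_union]
        tauto
      show ((E ∪ q.1 ∪ q.2) ∩ Eplus, (E ∪ q.1 ∪ q.2) ∩ I) = q
      rw [e1, e2]
    · intro A' hA'
      rw [Finset.mem_filter, Finset.mem_powerset] at hA'
      obtain ⟨hEA', hM0, -⟩ := (char A' hA'.1).1 hA'.2
      have hS : A' ∩ Eplus ⊆ Eplus := Finset.inter_subset_right
      have hB' : A' ∩ I ⊆ I := Finset.inter_subset_right
      have hrep : A' = E ∪ A' ∩ Eplus ∪ A' ∩ I :=
        (hleftinv A' hA'.1 hEA' hM0).symm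
      have d1 : Disjoint E (A' ∩ Eplus) :=
        Finset.disjoint_left.2 fun x hx hx' => hEK x hx (hS hx')
      have d2 : Disjoint (E ∪ A' ∩ Eplus) (A' ∩ I) := by
        refine Finset.disjoint_left.2 fun x hx hx' => ?_
        have hxI := hB' hx'
        rcases Finset.mem_union.1 hx with hx | hx
        · exact ((hImem x).1 hxI).2.1 hx
        · exact ((hImem x).1 hxI).2.2.1 (hS hx)
      have d3 : Disjoint (Eminus \ Eplus) (Eplus \ (A' ∩ Eplus)) :=
        Finset.disjoint_left.2 fun x hx hx' =>
          (Finset.mem_sdiff.1 hx).2 (Finset.mem_sdiff.1 hx').1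
      have d4 : Disjoint (Eminus \ Eplus ∪ Eplus \ (A' ∩ Eplus)) (I \ (A' ∩ I)) := by
        refine Finset.disjoint_left.2 fun x hx hx' => ?_
        have hxI := (Finset.mem_sdiff.1 hx').1
        rcases Finset.mem_union.1 hx with hx | hx
        · exact ((hImem x).1 hxI).2.2.2 (Finset.mem_sdiff.1 hx).1
        · exact ((hImem x).1 hxI).2.2.1 (Finset.mem_sdiff.1 hx).1
      calc (∏ a ∈ A', p a) * ∏ a ∈ A \ A', (1 - p a)
          = (∏ a ∈ E ∪ A' ∩ Eplus ∪ A' ∩ I, p a) *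
            ∏ a ∈ A \ (E ∪ A' ∩ Eplus ∪ A' ∩ I), (1 - p a) := by rw [← hrep]
        _ = g (A' ∩ Eplus, A' ∩ I) := by
            rw [hcompl _ _ hS hB', hg]
            simp only []
            rw [Finset.prod_union d2, Finset.prod_union d1,
              Finset.prod_union d4, Finset.prod_union d3]
  rw [key, Finset.sum_product]
  have hone : ∑ S ∈ Eplus.powerset, (∏ a ∈ S, p a) * ∏ a ∈ Eplus \ S, (1 - p a) = 1 := by
    rw [← Finset.prod_add]
    simp
  calc ∑ S ∈ Eplus.powerset, ∑ B' ∈ filt, g (S, B')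
      = ∑ S ∈ Eplus.powerset, ((∏ a ∈ S, p a) * ∏ a ∈ Eplus \ S, (1 - p a)) *
          (((∏ a ∈ E, p a) * ∏ b ∈ Eminus \ Eplus, (1 - p b)) *
            ∑ B' ∈ filt, (∏ c ∈ B', p c) * ∏ x ∈ I \ B', (1 - p x)) := by
        refine Finset.sum_congr rfl fun S hS => ?_
        rw [Finset.mul_sum, Finset.mul_sum]
        refine Finset.sum_congr rfl fun B' hB' => ?_
        rw [hg]
        ring
    _ = ((∏ a ∈ E, p a) * ∏ b ∈ Eminus \ Eplus, (1 - p b)) *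
          ∑ B' ∈ filt, (∏ c ∈ B', p c) * ∏ x ∈ I \ B', (1 - p x) := by
        rw [← Finset.sum_mul, hone, one_mul]
end

section
/- Let G^p = (A, R, p) be a finite probabilistic argument graph with p : A → [0,1], and let E ⊆ A be conflict-free. Let E⁺ = {β ∈ A | ∃α ∈ E, (α, β) ∈ R}, E⁻ = {β ∈ A | ∃α ∈ E, (β, α) ∈ R}, and I = A \ (E ∪ E⁺ ∪ E⁻). Then the probability that E is a preferred extension satisfies p(E^pr) = P_E · P_{I_PR}, where P_E = (Π_{α ∈ E} p(α)) · (Π_{β ∈ E⁻ \ E⁺} (1 − p(β))) and P_{I_PR} = Σ over all B' ⊆ I such that (i) for every α ∈ B' the set {β ∈ A | (β, α) ∈ R} ∩ B' is nonempty and (ii) the empty set is the only admissible set of the induced subgraph G↾B', of (Π_{γ ∈ B'} p(γ)) · (Π_{ξ ∈ I \ B'} (1 − p(ξ))); here p(E^pr) = Σ_{A' ⊆ A, E is a preferred extension of G↾A'} (Π_{α ∈ A'} p(α)) · (Π_{α ∈ A \ A'} (1 − p(α))). -/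
open scoped Classical

variable {α : Type*} [DecidableEq α]

lemma char_pref (A : Finset α) (R : Finset (α × α)) (hRA : R ⊆ A ×ˢ A)
    (E : Finset α) (hEA : E ⊆ A)
    (hcf : ConflictFree (fun a b => (a, b) ∈ R) E)
    (Eplus Eminus I : Finset α)
    (hEp : Eplus = A.filter (fun b => ∃ a ∈ E, (a, b) ∈ R))
    (hEm : Eminus = A.filter (fun b => ∃ a ∈ E, (b, a) ∈ R))
    (hI : I = A \ (E ∪ Eplus ∪ Eminus))
    (A' : Finset α) (hA' : A' ⊆ A) :
    PreferredIn A' (fun a b => (a, b) ∈ R) E ↔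
      E ⊆ A' ∧ (∀ x ∈ A', x ∈ Eminus → x ∈ Eplus) ∧
        (∀ a ∈ A' ∩ I, ((A.filter (fun b => (b, a) ∈ R)) ∩ (A' ∩ I)).Nonempty) ∧
        (∀ S : Finset α, AdmissibleIn (A' ∩ I) (fun a b => (a, b) ∈ R) S ↔ S = ∅) := by
  have hmem : ∀ {a b : α}, (a, b) ∈ R → a ∈ A ∧ b ∈ A := by
    intro a b h
    have := hRA h
    simpa [Finset.mem_product] using this
  have hmemEp : ∀ b, b ∈ Eplus ↔ b ∈ A ∧ ∃ a ∈ E, (a, b) ∈ R := by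
    intro b; simp [hEp]
  have hmemEm : ∀ b, b ∈ Eminus ↔ b ∈ A ∧ ∃ a ∈ E, (b, a) ∈ R := by
    intro b; simp [hEm]
  have hmemI : ∀ b, b ∈ I ↔ b ∈ A ∧ b ∉ E ∧ b ∉ Eplus ∧ b ∉ Eminus := by
    intro b; simp only [hI, Finset.mem_sdiff, Finset.mem_union]; tauto
  have hIE : ∀ x ∈ I, x ∉ E := fun x hx => ((hmemI x).1 hx).2.1
  have hIEp : ∀ x ∈ I, x ∉ Eplus := fun x hx => ((hmemI x).1 hx).2.2.1
  have hIEm : ∀ x ∈ I, x ∉ Eminus := fun x hx => ((hmemI x).1 hx).2.2.2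
  constructor
  · rintro ⟨⟨hEsub, hcfE, haccE⟩, hmax⟩
    have h1 : ∀ x ∈ A', x ∈ Eminus → x ∈ Eplus := by
      intro x hx hxm
      obtain ⟨hxA, a, ha, hr⟩ := (hmemEm x).1 hxm
      obtain ⟨c, hc, hcA', hxA', hcb⟩ := haccE a ha x ⟨hx, hEsub ha, hr⟩
      exact (hmemEp x).2 ⟨hxA, c, hc, hcb⟩
    refine ⟨hEsub, h1, ?_⟩
    have hii : ∀ S : Finset α, AdmissibleIn (A' ∩ I) (fun a b => (a, b) ∈ R) S ↔ S = ∅ := by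
      intro S
      constructor
      · rintro ⟨hSB, hScf, hSacc⟩
        have hSA' : S ⊆ A' := hSB.trans Finset.inter_subset_left
        have hSI : S ⊆ I := hSB.trans Finset.inter_subset_right
        have hadm : AdmissibleIn A' (fun a b => (a, b) ∈ R) (E ∪ S) := by
          refine ⟨Finset.union_subset hEsub hSA', ?_, ?_⟩
          · rintro a ha b hb ⟨haA', hbA', hab⟩
            rcases Finset.mem_union.1 ha with ha' | ha' <;>
              rcases Finset.mem_union.1 hb with hb' | hb'
            · exact hcf a ha' b hb' hab
            · exact hIEp b (hSI hb') ((hmemEp b).2 ⟨hA' hbA', a, ha', hab⟩)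
            · exact hIEm a (hSI ha') ((hmemEm a).2 ⟨hA' haA', b, hb', hab⟩)
            · exact hScf a ha' b hb' ⟨hSB ha', hSB hb', hab⟩
          · rintro a ha b ⟨hbA', haA', hba⟩
            rcases Finset.mem_union.1 ha with ha' | ha'
            · have hbm : b ∈ Eminus := (hmemEm b).2 ⟨hA' hbA', a, ha', hba⟩
              obtain ⟨hbA, c, hc, hcb⟩ := (hmemEp b).1 (h1 b hbA' hbm)
              exact ⟨c, Finset.mem_union_left _ hc, hEsub hc, hbA', hcb⟩
            · -- a ∈ S ⊆ I
              by_cases hbp : b ∈ Eplus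
              · obtain ⟨hbA, c, hc, hcb⟩ := (hmemEp b).1 hbp
                exact ⟨c, Finset.mem_union_left _ hc, hEsub hc, hbA', hcb⟩
              · have hbE : b ∉ E := fun hbE =>
                  hIEp a (hSI ha') ((hmemEp a).2 ⟨hA' haA', b, hbE, hba⟩)
                have hbm : b ∉ Eminus := fun hbm => hbp (h1 b hbA' hbm)
                have hbI : b ∈ I := (hmemI b).2 ⟨hA' hbA', hbE, hbp, hbm⟩
                obtain ⟨c, hc, hcB, hbB, hcb⟩ :=
                  hSacc a ha' b ⟨Finset.mem_inter.2 ⟨hbA', hbI⟩,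
                    Finset.mem_inter.2 ⟨hSA' ha', hSI ha'⟩, hba⟩
                exact ⟨c, Finset.mem_union_right _ hc, hSA' hc, hbA', hcb⟩
        have hES := hmax (E ∪ S) hadm Finset.subset_union_left
        -- S ⊆ E and S ⊆ I ⟹ S = ∅
        ext x
        simp only [Finset.notMem_empty, iff_false]
        intro hx
        have : x ∈ E := by
          have : x ∈ E ∪ S := Finset.mem_union_right _ hx
          rwa [hES] at this
        exact hIE x (hSI hx) this
      · rintro rfl
        exact ⟨Finset.empty_subset _, by intro a ha; simp at ha, by intro a ha; simp at ha⟩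
    refine ⟨?_, hii⟩
    intro a haB
    by_contra hne
    rw [Finset.not_nonempty_iff_eq_empty] at hne
    have haI : a ∈ I := (Finset.mem_inter.1 haB).2
    have haA : a ∈ A := ((hmemI a).1 haI).1
    have hadm : AdmissibleIn (A' ∩ I) (fun a b => (a, b) ∈ R) {a} := by
      refine ⟨Finset.singleton_subset_iff.2 haB, ?_, ?_⟩
      · rintro x hx y hy ⟨hxB, hyB, hxy⟩
        have hya := Finset.mem_singleton.1 hy
        have hxA : x ∈ A := hA' (Finset.mem_inter.1 hxB).1
        have hmemfil : x ∈ (A.filter (fun b => (b, y) ∈ R)) ∩ (A' ∩ I) :=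
          Finset.mem_inter.2 ⟨Finset.mem_filter.2 ⟨hxA, hxy⟩, hxB⟩
        rw [hya, hne] at hmemfil; simp at hmemfil
      · rintro x hx b ⟨hbB, hxB, hbx⟩
        have hxa := Finset.mem_singleton.1 hx
        have hbA : b ∈ A := hA' (Finset.mem_inter.1 hbB).1
        have hmemfil : b ∈ (A.filter (fun c => (c, x) ∈ R)) ∩ (A' ∩ I) :=
          Finset.mem_inter.2 ⟨Finset.mem_filter.2 ⟨hbA, hbx⟩, hbB⟩
        rw [hxa, hne] at hmemfil; simp at hmemfil
    have := (hii {a}).1 hadm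
    simp at this
  · rintro ⟨hEsub, hdisj, _, hii⟩
    have hadmE : AdmissibleIn A' (fun a b => (a, b) ∈ R) E := by
      refine ⟨hEsub, ?_, ?_⟩
      · rintro a ha b hb ⟨_, _, hab⟩; exact hcf a ha b hb hab
      · rintro a ha b ⟨hbA', haA', hba⟩
        have hbm : b ∈ Eminus := (hmemEm b).2 ⟨hA' hbA', a, ha, hba⟩
        obtain ⟨hbA, c, hc, hcb⟩ := (hmemEp b).1 (hdisj b hbA' hbm)
        exact ⟨c, hc, hEsub hc, hbA', hcb⟩
    refine ⟨hadmE, ?_⟩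
    rintro F ⟨hFA', hFcf, hFacc⟩ hEF
    have hFB : ∀ x ∈ F, x ∉ E → x ∈ A' ∩ I := by
      intro x hx hxE
      have hxA' := hFA' hx
      have hxA := hA' hxA'
      have hxEp : x ∉ Eplus := by
        intro hxp
        obtain ⟨_, a, ha, hr⟩ := (hmemEp x).1 hxp
        exact hFcf a (hEF ha) x hx ⟨hFA' (hEF ha), hxA', hr⟩
      have hxEm : x ∉ Eminus := by
        intro hxm
        obtain ⟨_, a, ha, hr⟩ := (hmemEm x).1 hxm
        exact hFcf x hx a (hEF ha) ⟨hxA', hFA' (hEF ha), hr⟩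
      exact Finset.mem_inter.2 ⟨hxA', (hmemI x).2 ⟨hxA, hxE, hxEp, hxEm⟩⟩
    have hSadm : AdmissibleIn (A' ∩ I) (fun a b => (a, b) ∈ R) (F \ E) := by
      refine ⟨?_, ?_, ?_⟩
      · intro x hx
        obtain ⟨hxF, hxE⟩ := Finset.mem_sdiff.1 hx
        exact hFB x hxF hxE
      · rintro a ha b hb ⟨haB, hbB, hab⟩
        have haF := (Finset.mem_sdiff.1 ha).1
        have hbF := (Finset.mem_sdiff.1 hb).1
        exact hFcf a haF b hbF ⟨(Finset.mem_inter.1 haB).1, (Finset.mem_inter.1 hbB).1, hab⟩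
      · rintro a ha b ⟨hbB, haB, hba⟩
        have haF := (Finset.mem_sdiff.1 ha).1
        obtain ⟨c, hcF, hcA', hbA', hcb⟩ :=
          hFacc a haF b ⟨(Finset.mem_inter.1 hbB).1, (Finset.mem_inter.1 haB).1, hba⟩
        have hcE : c ∉ E := by
          intro hcE
          have hbI : b ∈ I := (Finset.mem_inter.1 hbB).2
          exact hIEp b hbI ((hmemEp b).2 ⟨hA' hbA', c, hcE, hcb⟩)
        exact ⟨c, Finset.mem_sdiff.2 ⟨hcF, hcE⟩, hFB c hcF hcE, hbB, hcb⟩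
    have hS0 := (hii (F \ E)).1 hSadm
    apply Finset.Subset.antisymm _ hEF
    intro x hx
    by_contra hxE
    have : x ∈ F \ E := Finset.mem_sdiff.2 ⟨hx, hxE⟩
    rw [hS0] at this; simp at this

theorem stmt11 (A : Finset α) (R : Finset (α × α)) (hRA : R ⊆ A ×ˢ A)
    (p : α → ℝ) (hp : ∀ a ∈ A, 0 ≤ p a ∧ p a ≤ 1)
    (E : Finset α) (hEA : E ⊆ A)
    (hcf : ConflictFree (fun a b => (a, b) ∈ R) E)
    (Eplus Eminus I : Finset α)
    (hEp : Eplus = A.filter (fun b => ∃ a ∈ E, (a, b) ∈ R))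
    (hEm : Eminus = A.filter (fun b => ∃ a ∈ E, (b, a) ∈ R))
    (hI : I = A \ (E ∪ Eplus ∪ Eminus)) :
    ∑ A' ∈ A.powerset.filter
        (fun A' => PreferredIn A' (fun a b => (a, b) ∈ R) E),
        (∏ a ∈ A', p a) * ∏ a ∈ A \ A', (1 - p a)
      = ((∏ a ∈ E, p a) * ∏ b ∈ Eminus \ Eplus, (1 - p b)) *
        ∑ B' ∈ I.powerset.filter
            (fun B' =>
              (∀ a ∈ B', ((A.filter (fun b => (b, a) ∈ R)) ∩ B').Nonempty) ∧
              (∀ S : Finset α, AdmissibleIn B' (fun a b => (a, b) ∈ R) S ↔ S = ∅)),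
            (∏ c ∈ B', p c) * ∏ x ∈ I \ B', (1 - p x) := by
  classical
  have hmemEp : ∀ b, b ∈ Eplus ↔ b ∈ A ∧ ∃ a ∈ E, (a, b) ∈ R := by
    intro b; simp [hEp]
  have hmemEm : ∀ b, b ∈ Eminus ↔ b ∈ A ∧ ∃ a ∈ E, (b, a) ∈ R := by
    intro b; simp [hEm]
  have hmemI : ∀ b, b ∈ I ↔ b ∈ A ∧ b ∉ E ∧ b ∉ Eplus ∧ b ∉ Eminus := by
    intro b; simp only [hI, Finset.mem_sdiff, Finset.mem_union]; tauto
  have hEpA : Eplus ⊆ A := by rw [hEp]; exact Finset.filter_subset _ _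
  have hEmA : Eminus ⊆ A := by rw [hEm]; exact Finset.filter_subset _ _
  have hIA : I ⊆ A := by rw [hI]; exact Finset.sdiff_subset
  have hEEp : ∀ x ∈ E, x ∉ Eplus := by
    intro x hx hxp
    obtain ⟨_, a, ha, hr⟩ := (hmemEp x).1 hxp
    exact hcf a ha x hx hr
  have hEEm : ∀ x ∈ E, x ∉ Eminus := by
    intro x hx hxm
    obtain ⟨_, a, ha, hr⟩ := (hmemEm x).1 hxm
    exact hcf x hx a ha hr
  have hIE : ∀ x ∈ I, x ∉ E := fun x hx => ((hmemI x).1 hx).2.1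
  have hIEp : ∀ x ∈ I, x ∉ Eplus := fun x hx => ((hmemI x).1 hx).2.2.1
  have hIEm : ∀ x ∈ I, x ∉ Eminus := fun x hx => ((hmemI x).1 hx).2.2.2
  have hcover : ∀ x ∈ A, x ∈ E ∨ x ∈ Eplus ∨ x ∈ Eminus \ Eplus ∨ x ∈ I := by
    intro x hx
    by_cases h1 : x ∈ E
    · exact Or.inl h1
    by_cases h2 : x ∈ Eplus
    · exact Or.inr (Or.inl h2)
    by_cases h3 : x ∈ Eminus
    · exact Or.inr (Or.inr (Or.inl (Finset.mem_sdiff.2 ⟨h3, h2⟩)))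
    · exact Or.inr (Or.inr (Or.inr ((hmemI x).2 ⟨hx, h1, h2, h3⟩)))
  have hchar := char_pref A R hRA E hEA hcf Eplus Eminus I hEp hEm hI
  set PE : ℝ := (∏ a ∈ E, p a) * ∏ b ∈ Eminus \ Eplus, (1 - p b) with hPE
  set Q : Finset α → Prop := fun B' =>
      (∀ a ∈ B', ((A.filter (fun b => (b, a) ∈ R)) ∩ B').Nonempty) ∧
      (∀ S : Finset α, AdmissibleIn B' (fun a b => (a, b) ∈ R) S ↔ S = ∅) with hQ
  have step1 :
      ∑ A' ∈ A.powerset.filter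
          (fun A' => PreferredIn A' (fun a b => (a, b) ∈ R) E),
          (∏ a ∈ A', p a) * ∏ a ∈ A \ A', (1 - p a)
        = ∑ x ∈ Eplus.powerset ×ˢ (I.powerset.filter Q),
            ((∏ a ∈ x.1, p a) * ∏ a ∈ Eplus \ x.1, (1 - p a)) *
              (PE * ((∏ c ∈ x.2, p c) * ∏ y ∈ I \ x.2, (1 - p y))) := by
    refine Finset.sum_nbij' (fun A' => (A' ∩ Eplus, A' ∩ I))
      (fun x => E ∪ x.1 ∪ x.2) ?_ ?_ ?_ ?_ ?_
    · intro A' hA'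
      obtain ⟨hA'A, hpref⟩ := Finset.mem_filter.1 hA'
      rw [Finset.mem_powerset] at hA'A
      obtain ⟨hEsub, hdisj, h1, h2⟩ := (hchar A' hA'A).1 hpref
      exact Finset.mem_product.2 ⟨Finset.mem_powerset.2 Finset.inter_subset_right,
        Finset.mem_filter.2 ⟨Finset.mem_powerset.2 Finset.inter_subset_right, h1, h2⟩⟩
    · rintro ⟨C, B⟩ hx
      obtain ⟨hC, hB⟩ := Finset.mem_product.1 hx
      rw [Finset.mem_powerset] at hC
      obtain ⟨hB1, hQB⟩ := Finset.mem_filter.1 hB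
      rw [Finset.mem_powerset] at hB1
      have hsubA : E ∪ C ∪ B ⊆ A :=
        Finset.union_subset (Finset.union_subset hEA (hC.trans hEpA)) (hB1.trans hIA)
      have hEq : (E ∪ C ∪ B) ∩ I = B := by
        ext y
        simp only [Finset.mem_inter, Finset.mem_union]
        constructor
        · rintro ⟨(h | h) | h, hyI⟩
          · exact absurd h (hIE y hyI)
          · exact absurd (hC h) (hIEp y hyI)
          · exact h
        · intro hy
          exact ⟨Or.inr hy, hB1 hy⟩
      refine Finset.mem_filter.2 ⟨Finset.mem_powerset.2 hsubA, ?_⟩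
      refine (hchar _ hsubA).2 ⟨?_, ?_, ?_, ?_⟩
      · intro x hx
        exact Finset.mem_union_left _ (Finset.mem_union_left _ hx)
      · intro x hx hxm
        rcases Finset.mem_union.1 hx with hx' | hx'
        · rcases Finset.mem_union.1 hx' with hx'' | hx''
          · exact absurd hxm (hEEm x hx'')
          · exact hC hx''
        · exact absurd hxm (hIEm x (hB1 hx'))
      · rw [hEq]; exact hQB.1
      · rw [hEq]; exact hQB.2
    · intro A' hA'
      obtain ⟨hA'A, hpref⟩ := Finset.mem_filter.1 hA'
      rw [Finset.mem_powerset] at hA'A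
      obtain ⟨hEsub, hdisj, _, _⟩ := (hchar A' hA'A).1 hpref
      apply Finset.Subset.antisymm
      · exact Finset.union_subset (Finset.union_subset hEsub Finset.inter_subset_left)
          Finset.inter_subset_left
      · intro x hx
        rcases hcover x (hA'A hx) with h | h | h | h
        · exact Finset.mem_union_left _ (Finset.mem_union_left _ h)
        · exact Finset.mem_union_left _
            (Finset.mem_union_right _ (Finset.mem_inter.2 ⟨hx, h⟩))
        · obtain ⟨h1, h2⟩ := Finset.mem_sdiff.1 h
          exact absurd (hdisj x hx h1) h2
        · exact Finset.mem_union_right _ (Finset.mem_inter.2 ⟨hx, h⟩)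
    · rintro ⟨C, B⟩ hx
      obtain ⟨hC, hB⟩ := Finset.mem_product.1 hx
      rw [Finset.mem_powerset] at hC
      obtain ⟨hB1, hQB⟩ := Finset.mem_filter.1 hB
      rw [Finset.mem_powerset] at hB1
      have h1 : (E ∪ C ∪ B) ∩ Eplus = C := by
        ext y
        simp only [Finset.mem_inter, Finset.mem_union]
        constructor
        · rintro ⟨(h | h) | h, hyp⟩
          · exact absurd hyp (hEEp y h)
          · exact h
          · exact absurd hyp (hIEp y (hB1 h))
        · intro hy
          exact ⟨Or.inl (Or.inr hy), hC hy⟩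
      have h2 : (E ∪ C ∪ B) ∩ I = B := by
        ext y
        simp only [Finset.mem_inter, Finset.mem_union]
        constructor
        · rintro ⟨(h | h) | h, hyI⟩
          · exact absurd h (hIE y hyI)
          · exact absurd (hC h) (hIEp y hyI)
          · exact h
        · intro hy
          exact ⟨Or.inr hy, hB1 hy⟩
      simp only [Prod.mk.injEq]
      exact ⟨h1, h2⟩
    · intro A' hA'
      obtain ⟨hA'A, hpref⟩ := Finset.mem_filter.1 hA'
      rw [Finset.mem_powerset] at hA'A
      obtain ⟨hEsub, hdisj, _, _⟩ := (hchar A' hA'A).1 hpref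
      set C := A' ∩ Eplus with hCdef
      set B := A' ∩ I with hBdef
      have hCEp : C ⊆ Eplus := Finset.inter_subset_right
      have hBI : B ⊆ I := Finset.inter_subset_right
      have hCA' : C ⊆ A' := Finset.inter_subset_left
      have hBA' : B ⊆ A' := Finset.inter_subset_left
      have hA'eq : A' = E ∪ C ∪ B := by
        apply Finset.Subset.antisymm
        · intro x hx
          rcases hcover x (hA'A hx) with h | h | h | h
          · exact Finset.mem_union_left _ (Finset.mem_union_left _ h)
          · exact Finset.mem_union_left _
              (Finset.mem_union_right _ (Finset.mem_inter.2 ⟨hx, h⟩))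
          · obtain ⟨hm1, hm2⟩ := Finset.mem_sdiff.1 h
            exact absurd (hdisj x hx hm1) hm2
          · exact Finset.mem_union_right _ (Finset.mem_inter.2 ⟨hx, h⟩)
        · exact Finset.union_subset (Finset.union_subset hEsub hCA') hBA'
      have hd1 : Disjoint E C := Finset.disjoint_left.2
        (fun x hx hx2 => hEEp x hx (hCEp hx2))
      have hd2 : Disjoint (E ∪ C) B := Finset.disjoint_left.2 (by
        intro x hx hx2
        have hxI := hBI hx2
        rcases Finset.mem_union.1 hx with h | h
        · exact hIE x hxI h
        · exact hIEp x hxI (hCEp h))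
      have hprod1 : ∏ a ∈ A', p a = (∏ a ∈ E, p a) * (∏ a ∈ C, p a) * ∏ a ∈ B, p a := by
        rw [hA'eq, Finset.prod_union hd2, Finset.prod_union hd1]
      have hdiff : A \ A' = (Eplus \ C) ∪ ((Eminus \ Eplus) ∪ (I \ B)) := by
        ext y
        simp only [Finset.mem_sdiff, Finset.mem_union]
        constructor
        · rintro ⟨hyA, hyA'⟩
          rcases hcover y hyA with h | h | h | h
          · exact absurd (hEsub h) hyA'
          · exact Or.inl ⟨h, fun hc => hyA' (hCA' hc)⟩
          · exact Or.inr (Or.inl (Finset.mem_sdiff.1 h))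
          · exact Or.inr (Or.inr ⟨h, fun hb => hyA' (hBA' hb)⟩)
        · rintro (⟨h1, h2⟩ | ⟨h1, h2⟩ | ⟨h1, h2⟩)
          · exact ⟨hEpA h1, fun hy => h2 (Finset.mem_inter.2 ⟨hy, h1⟩)⟩
          · exact ⟨hEmA h1, fun hy => h2 (hdisj y hy h1)⟩
          · exact ⟨hIA h1, fun hy => h2 (Finset.mem_inter.2 ⟨hy, h1⟩)⟩
      have hd3 : Disjoint (Eplus \ C) ((Eminus \ Eplus) ∪ (I \ B)) :=
        Finset.disjoint_left.2 (by
          intro x hx hx2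
          have hxp := (Finset.mem_sdiff.1 hx).1
          rcases Finset.mem_union.1 hx2 with h | h
          · exact (Finset.mem_sdiff.1 h).2 hxp
          · exact hIEp x (Finset.mem_sdiff.1 h).1 hxp)
      have hd4 : Disjoint (Eminus \ Eplus) (I \ B) := Finset.disjoint_left.2 (by
        intro x hx hx2
        exact hIEm x (Finset.mem_sdiff.1 hx2).1 (Finset.mem_sdiff.1 hx).1)
      have hprod2 : ∏ a ∈ A \ A', (1 - p a) =
          (∏ a ∈ Eplus \ C, (1 - p a)) * ((∏ a ∈ Eminus \ Eplus, (1 - p a)) *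
            ∏ a ∈ I \ B, (1 - p a)) := by
        rw [hdiff, Finset.prod_union hd3, Finset.prod_union hd4]
      rw [hprod1, hprod2, hPE]
      ring
  rw [step1, Finset.sum_product]
  have hinner : ∀ C ∈ Eplus.powerset,
      ∑ B ∈ I.powerset.filter Q,
          ((∏ a ∈ C, p a) * ∏ a ∈ Eplus \ C, (1 - p a)) *
            (PE * ((∏ c ∈ B, p c) * ∏ y ∈ I \ B, (1 - p y)))
        = ((∏ a ∈ C, p a) * ∏ a ∈ Eplus \ C, (1 - p a)) *
            (PE * ∑ B ∈ I.powerset.filter Q, (∏ c ∈ B, p c) * ∏ y ∈ I \ B, (1 - p y)) := by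
    intro C _
    rw [Finset.mul_sum, Finset.mul_sum]
  rw [Finset.sum_congr rfl hinner, ← Finset.sum_mul]
  have hone : ∑ C ∈ Eplus.powerset, (∏ a ∈ C, p a) * ∏ a ∈ Eplus \ C, (1 - p a) = 1 := by
    rw [← Finset.prod_add]
    simp
  rw [hone, one_mul]
end

section
/- Let G^p = (A, R, p) be a finite probabilistic argument graph with p : A → [0,1], and let E ⊆ A be conflict-free. Let E⁺ = {β ∈ A | ∃α ∈ E, (α, β) ∈ R} and E⁻ = {β ∈ A | ∃α ∈ E, (β, α) ∈ R}. Then the probability that E is the grounded extension satisfies p(E^gr) = p(E^co) · P_GR, where P_GR = Σ over all B'' ⊆ E⁺ ∩ E⁻ such that E is the grounded extension of the induced subgraph G↾(E ∪ B''), of (Π_{α ∈ B''} p(α)) · (Π_{β ∈ (E⁺ ∩ E⁻) \ B''} (1 − p(β))); here p(E^σ) = Σ_{A' ⊆ A, E is a σ-extension of G↾A'} (Π_{α ∈ A'} p(α)) · (Π_{α ∈ A \ A'} (1 − p(α))) for σ the grounded (respectively complete) semantics. -/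
open scoped Classical

variable {α : Type*} [DecidableEq α]

set_option linter.unusedSectionVars false
set_option linter.unusedVariables false

namespace Stmt12Aux

variable {r : α → α → Prop} {A' B E C S S' F : Finset α}

lemma acceptable_mono (h : S ⊆ S') {a : α} (ha : Acceptable r S a) :
    Acceptable r S' a := fun b hb => by
  obtain ⟨c, hc, hcb⟩ := ha b hb
  exact ⟨c, h hc, hcb⟩

noncomputable def Dfun (A' : Finset α) (r : α → α → Prop) (S : Finset α) : Finset α :=
  A'.filter (fun a => Acceptable (Restrict A' r) S a)

lemma mem_Dfun {a : α} :
    a ∈ Dfun A' r S ↔ a ∈ A' ∧ Acceptable (Restrict A' r) S a := by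
  simp [Dfun]

lemma Dfun_mono (h : S ⊆ S') : Dfun A' r S ⊆ Dfun A' r S' := by
  intro a ha
  rw [mem_Dfun] at ha ⊢
  exact ⟨ha.1, acceptable_mono h ha.2⟩

lemma Dfun_subset : Dfun A' r S ⊆ A' := Finset.filter_subset _ _

lemma iter_subset (A' : Finset α) (r : α → α → Prop) (k : ℕ) :
    (Dfun A' r)^[k] ∅ ⊆ A' := by
  cases k with
  | zero => simp
  | succ k => rw [Function.iterate_succ_apply']; exact Dfun_subset

lemma iter_chain (A' : Finset α) (r : α → α → Prop) (k : ℕ) :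
    (Dfun A' r)^[k] ∅ ⊆ (Dfun A' r)^[k + 1] ∅ := by
  induction k with
  | zero => simp
  | succ k ih =>
    rw [Function.iterate_succ_apply', Function.iterate_succ_apply']
    exact Dfun_mono ih

lemma step_eq (A' : Finset α) (r : α → α → Prop) {k : ℕ}
    (h : (Dfun A' r)^[k] ∅ = (Dfun A' r)^[k + 1] ∅) :
    (Dfun A' r)^[k + 1] ∅ = (Dfun A' r)^[k + 2] ∅ := by
  have e1 := Function.iterate_succ_apply' (Dfun A' r) k (∅ : Finset α)
  have e2 := Function.iterate_succ_apply' (Dfun A' r) (k + 1) (∅ : Finset α)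
  rw [e2, ← h, ← e1]
  exact h

noncomputable def Lfix (A' : Finset α) (r : α → α → Prop) : Finset α :=
  (Dfun A' r)^[A'.card] ∅

lemma stab (A' : Finset α) (r : α → α → Prop) (k : ℕ) :
    ((Dfun A' r)^[k] ∅ = (Dfun A' r)^[k + 1] ∅) ∨ k ≤ ((Dfun A' r)^[k] ∅).card := by
  induction k with
  | zero => right; exact Nat.zero_le _
  | succ k ih =>
    by_cases h : (Dfun A' r)^[k + 1] ∅ = (Dfun A' r)^[k + 2] ∅
    · exact Or.inl h
    · right
      rcases ih with h' | h'
      · exact absurd (step_eq A' r h') h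
      · have hss : (Dfun A' r)^[k] ∅ ⊂ (Dfun A' r)^[k + 1] ∅ := by
          refine Finset.ssubset_iff_subset_ne.mpr ⟨iter_chain A' r k, ?_⟩
          intro he
          exact h (step_eq A' r he)
        have := Finset.card_lt_card hss
        omega

lemma L_fixed (A' : Finset α) (r : α → α → Prop) :
    Dfun A' r (Lfix A' r) = Lfix A' r := by
  rcases stab A' r A'.card with h | h
  · have e1 := Function.iterate_succ_apply' (Dfun A' r) A'.card (∅ : Finset α)
    rw [Lfix, ← e1, ← h]
  · have h1 : Lfix A' r = A' :=
      Finset.eq_of_subset_of_card_le (iter_subset A' r _) h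
    apply Finset.Subset.antisymm
    · rw [h1]; exact Dfun_subset
    · have h2 := iter_chain A' r A'.card
      rwa [Function.iterate_succ_apply'] at h2

lemma iterate_stable (A' : Finset α) (r : α → α → Prop) {M : ℕ}
    (h : Dfun A' r ((Dfun A' r)^[M] ∅) = (Dfun A' r)^[M] ∅) (j : ℕ) :
    (Dfun A' r)^[M + j] ∅ = (Dfun A' r)^[M] ∅ := by
  induction j with
  | zero => rfl
  | succ j ih =>
    have : M + (j + 1) = (M + j) + 1 := rfl
    rw [this, Function.iterate_succ_apply', ih, h]

lemma L_least (hF : CompleteIn A' r F) : Lfix A' r ⊆ F := by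
  suffices h : ∀ k, (Dfun A' r)^[k] ∅ ⊆ F from h _
  intro k
  induction k with
  | zero => simp
  | succ k ih =>
    rw [Function.iterate_succ_apply']
    intro a ha
    rw [mem_Dfun] at ha
    exact hF.2 a ha.1 (acceptable_mono ih ha.2)

lemma cf_Dfun (hS : ConflictFree (Restrict A' r) S) :
    ConflictFree (Restrict A' r) (Dfun A' r S) := by
  intro a ha b hb hab
  rw [mem_Dfun] at ha hb
  obtain ⟨c, hcS, hca⟩ := hb.2 a hab
  obtain ⟨d, hdS, hdc⟩ := ha.2 c hca
  exact hS d hdS c hcS hdc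

lemma L_cf (A' : Finset α) (r : α → α → Prop) :
    ConflictFree (Restrict A' r) (Lfix A' r) := by
  suffices h : ∀ k, ConflictFree (Restrict A' r) ((Dfun A' r)^[k] ∅) from h _
  intro k
  induction k with
  | zero => intro a ha; simp at ha
  | succ k ih =>
    rw [Function.iterate_succ_apply']
    exact cf_Dfun ih

lemma L_complete (A' : Finset α) (r : α → α → Prop) :
    CompleteIn A' r (Lfix A' r) := by
  refine ⟨⟨iter_subset _ _ _, L_cf _ _, ?_⟩, ?_⟩
  · intro a ha
    rw [← L_fixed A' r, mem_Dfun] at ha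
    exact ha.2
  · intro a ha hacc
    rw [← L_fixed A' r, mem_Dfun]
    exact ⟨ha, hacc⟩

lemma grounded_iff : GroundedIn A' r E ↔ CompleteIn A' r E ∧ E = Lfix A' r := by
  constructor
  · rintro ⟨h1, h2⟩
    exact ⟨h1, Finset.Subset.antisymm (h2 _ (L_complete _ _)) (L_least h1)⟩
  · rintro ⟨h1, h2⟩
    refine ⟨h1, fun F hF => ?_⟩
    rw [h2]
    exact L_least hF

/-! E-specific lemmas.  `C` plays the role of `E⁺ ∩ E⁻`. -/

lemma restrict_cf (hcf : ConflictFree r E) (X : Finset α) :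
    ConflictFree (Restrict X r) E :=
  fun a ha b hb hab => hcf a ha b hb hab.2.2

lemma acc_inv (hCp : ∀ c ∈ C, ∃ e ∈ E, r e c) {A₁ A₂ : Finset α}
    (h1 : E ⊆ A₁) (h12 : A₁ ⊆ A₂) (h2 : A₂ ⊆ A₁ ∪ C) {a : α} (ha : a ∈ A₁) :
    Acceptable (Restrict A₁ r) E a ↔ Acceptable (Restrict A₂ r) E a := by
  constructor
  · intro h b hb
    obtain ⟨hbA₂, haA₂, hba⟩ := hb
    rcases Finset.mem_union.mp (h2 hbA₂) with hbA₁ | hbC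
    · obtain ⟨c, hcE, hc⟩ := h b ⟨hbA₁, ha, hba⟩
      exact ⟨c, hcE, h12 hc.1, h12 hc.2.1, hc.2.2⟩
    · obtain ⟨e, heE, hre⟩ := hCp b hbC
      exact ⟨e, heE, h12 (h1 heE), hbA₂, hre⟩
  · intro h b hb
    obtain ⟨hbA₁, _, hba⟩ := hb
    obtain ⟨c, hcE, hc⟩ := h b ⟨h12 hbA₁, h12 ha, hba⟩
    exact ⟨c, hcE, h1 hcE, hbA₁, hc.2.2⟩

lemma cpl_inv (hcf : ConflictFree r E) (hCp : ∀ c ∈ C, ∃ e ∈ E, r e c)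
    {A₁ A₂ : Finset α} (h1 : E ⊆ A₁) (h12 : A₁ ⊆ A₂) (h2 : A₂ ⊆ A₁ ∪ C) :
    CompleteIn A₁ r E ↔ CompleteIn A₂ r E := by
  constructor
  · intro h
    refine ⟨⟨h1.trans h12, restrict_cf hcf _, fun a ha =>
      (acc_inv hCp h1 h12 h2 (h1 ha)).mp (h.1.2.2 a ha)⟩, ?_⟩
    intro a haA₂ hacc
    rcases Finset.mem_union.mp (h2 haA₂) with haA₁ | haC
    · exact h.2 a haA₁ ((acc_inv hCp h1 h12 h2 haA₁).mpr hacc)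
    · obtain ⟨e, heE, hre⟩ := hCp a haC
      obtain ⟨d, hdE, hd⟩ := hacc e ⟨h12 (h1 heE), haA₂, hre⟩
      exact absurd hd.2.2 (hcf d hdE e heE)
  · intro h
    refine ⟨⟨h1, restrict_cf hcf _, fun a ha =>
      (acc_inv hCp h1 h12 h2 (h1 ha)).mpr (h.1.2.2 a ha)⟩, ?_⟩
    intro a haA₁ hacc
    exact h.2 a (h12 haA₁) ((acc_inv hCp h1 h12 h2 haA₁).mp hacc)

lemma cpl_B (hcf : ConflictFree r E) (hCp : ∀ c ∈ C, ∃ e ∈ E, r e c)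
    (hEA' : E ⊆ A') (h : CompleteIn A' r E) :
    CompleteIn (E ∪ A' ∩ C) r E := by
  have hBsub : E ∪ A' ∩ C ⊆ A' :=
    Finset.union_subset hEA' (Finset.inter_subset_left)
  refine ⟨⟨Finset.subset_union_left, restrict_cf hcf _, ?_⟩, ?_⟩
  · intro a ha b hb
    obtain ⟨hbB, haB, hba⟩ := hb
    obtain ⟨c, hcE, hc⟩ := h.1.2.2 a ha b ⟨hBsub hbB, hEA' ha, hba⟩
    exact ⟨c, hcE, Finset.mem_union_left _ hcE, hbB, hc.2.2⟩
  · intro a haB hacc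
    rcases Finset.mem_union.mp haB with haE | haC
    · exact haE
    · obtain ⟨e, heE, hre⟩ := hCp a (Finset.mem_inter.mp haC).2
      obtain ⟨d, hdE, hd⟩ := hacc e ⟨Finset.mem_union_left _ heE, haB, hre⟩
      exact absurd hd.2.2 (hcf d hdE e heE)

lemma D_sub_E (h : CompleteIn A' r E) (hS : S ⊆ E) : Dfun A' r S ⊆ E := by
  intro a ha
  rw [mem_Dfun] at ha
  exact h.2 a ha.1 (acceptable_mono hS ha.2)

lemma D_agree (hcf : ConflictFree r E) (hCp : ∀ c ∈ C, ∃ e ∈ E, r e c)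
    (hCm : ∀ b ∈ A', (∃ a ∈ E, r b a) → (∃ c ∈ E, r c b) → b ∈ C)
    (hEA' : E ⊆ A') (hc : CompleteIn A' r E) (hS : S ⊆ E) :
    Dfun A' r S = Dfun (E ∪ A' ∩ C) r S := by
  have hB : CompleteIn (E ∪ A' ∩ C) r E := cpl_B hcf hCp hEA' hc
  have hBsub : E ∪ A' ∩ C ⊆ A' :=
    Finset.union_subset hEA' (Finset.inter_subset_left)
  ext a
  simp only [mem_Dfun]
  constructor
  · rintro ⟨haA', hacc⟩
    have haE : a ∈ E := hc.2 a haA' (acceptable_mono hS hacc)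
    refine ⟨Finset.mem_union_left _ haE, ?_⟩
    rintro b ⟨hbB, haB, hba⟩
    obtain ⟨c, hcS, hcb⟩ := hacc b ⟨hBsub hbB, haA', hba⟩
    exact ⟨c, hcS, Finset.mem_union_left _ (hS hcS), hbB, hcb.2.2⟩
  · rintro ⟨haB, hacc⟩
    have haE : a ∈ E := hB.2 a haB (acceptable_mono hS hacc)
    refine ⟨hEA' haE, ?_⟩
    rintro b ⟨hbA', haA', hba⟩
    have hbEp : ∃ c ∈ E, r c b := by
      obtain ⟨c, hcE, hcb⟩ := hc.1.2.2 a haE b ⟨hbA', haA', hba⟩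
      exact ⟨c, hcE, hcb.2.2⟩
    have hbC : b ∈ C := hCm b hbA' ⟨a, haE, hba⟩ hbEp
    obtain ⟨c, hcS, hcb⟩ := hacc b
      ⟨Finset.mem_union_right _ (Finset.mem_inter.mpr ⟨hbA', hbC⟩),
        Finset.mem_union_left _ haE, hba⟩
    exact ⟨c, hcS, hEA' (hS hcS), hbA', hcb.2.2⟩

lemma L_agree (hcf : ConflictFree r E) (hCp : ∀ c ∈ C, ∃ e ∈ E, r e c)
    (hCm : ∀ b ∈ A', (∃ a ∈ E, r b a) → (∃ c ∈ E, r c b) → b ∈ C)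
    (hEA' : E ⊆ A') (hc : CompleteIn A' r E) :
    Lfix A' r = Lfix (E ∪ A' ∩ C) r := by
  have hBsub : E ∪ A' ∩ C ⊆ A' :=
    Finset.union_subset hEA' (Finset.inter_subset_left)
  have hiter : ∀ k, (Dfun A' r)^[k] ∅ = (Dfun (E ∪ A' ∩ C) r)^[k] ∅ ∧
      (Dfun A' r)^[k] ∅ ⊆ E := by
    intro k
    induction k with
    | zero => exact ⟨rfl, Finset.empty_subset _⟩
    | succ k ih =>
      constructor
      · rw [Function.iterate_succ_apply', Function.iterate_succ_apply',
          ← ih.1, D_agree hcf hCp hCm hEA' hc ih.2]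
      · rw [Function.iterate_succ_apply']
        exact D_sub_E hc ih.2
  have hMN : (E ∪ A' ∩ C).card ≤ A'.card := Finset.card_le_card hBsub
  calc Lfix A' r = (Dfun (E ∪ A' ∩ C) r)^[A'.card] ∅ := (hiter _).1
    _ = (Dfun (E ∪ A' ∩ C) r)^[(E ∪ A' ∩ C).card + (A'.card - (E ∪ A' ∩ C).card)] ∅ := by
        rw [Nat.add_sub_cancel' hMN]
    _ = Lfix (E ∪ A' ∩ C) r := iterate_stable _ _ (L_fixed _ _) _

lemma grd_key (hcf : ConflictFree r E) (hCp : ∀ c ∈ C, ∃ e ∈ E, r e c)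
    (hCm : ∀ b ∈ A', (∃ a ∈ E, r b a) → (∃ c ∈ E, r c b) → b ∈ C) :
    GroundedIn A' r E ↔ CompleteIn A' r E ∧ GroundedIn (E ∪ A' ∩ C) r E := by
  by_cases hc : CompleteIn A' r E
  · have hEA' : E ⊆ A' := hc.1.1
    have hLB := L_agree hcf hCp hCm hEA' hc
    have hB := cpl_B hcf hCp hEA' hc
    rw [grounded_iff, grounded_iff]
    constructor
    · rintro ⟨-, hE⟩
      exact ⟨hc, hB, by rw [← hLB]; exact hE⟩
    · rintro ⟨-, -, hE⟩
      exact ⟨hc, by rw [hLB]; exact hE⟩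
  · exact ⟨fun h => absurd h.1 hc, fun h => absurd h.1 hc⟩

/-! Summation helpers -/

lemma sum_pow_split {u v : Finset α} (h : Disjoint u v) (g : Finset α → ℝ) :
    ∑ x ∈ (u ∪ v).powerset, g x =
      ∑ s ∈ u.powerset, ∑ t ∈ v.powerset, g (s ∪ t) := by
  rw [← Finset.sum_product']
  refine Finset.sum_nbij' (fun x => (x ∩ u, x ∩ v)) (fun p => p.1 ∪ p.2) ?_ ?_ ?_ ?_ ?_
  · intro x hx
    simp only [Finset.mem_product, Finset.mem_powerset]
    exact ⟨Finset.inter_subset_right, Finset.inter_subset_right⟩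
  · intro p hp
    simp only [Finset.mem_product, Finset.mem_powerset] at hp
    exact Finset.mem_powerset.mpr (Finset.union_subset_union hp.1 hp.2)
  · intro x hx
    rw [Finset.mem_powerset] at hx
    show x ∩ u ∪ x ∩ v = x
    rw [← Finset.inter_union_distrib_left]
    exact Finset.inter_eq_left.mpr hx
  · intro p hp
    simp only [Finset.mem_product, Finset.mem_powerset] at hp
    have d1 : p.2 ∩ u = ∅ := Finset.disjoint_iff_inter_eq_empty.mp (h.symm.mono_left hp.2)
    have d2 : p.1 ∩ v = ∅ := Finset.disjoint_iff_inter_eq_empty.mp (h.mono_left hp.1)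
    have e1 : (p.1 ∪ p.2) ∩ u = p.1 := by
      rw [Finset.union_inter_distrib_right, d1, Finset.inter_eq_left.mpr hp.1,
        Finset.union_empty]
    have e2 : (p.1 ∪ p.2) ∩ v = p.2 := by
      rw [Finset.union_inter_distrib_right, d2, Finset.inter_eq_left.mpr hp.2,
        Finset.empty_union]
    show ((p.1 ∪ p.2) ∩ u, (p.1 ∪ p.2) ∩ v) = p
    rw [e1, e2]
  · intro x hx
    rw [Finset.mem_powerset] at hx
    show g x = g (x ∩ u ∪ x ∩ v)
    rw [← Finset.inter_union_distrib_left, Finset.inter_eq_left.mpr hx]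


lemma cpl_ext {r : α → α → Prop} {E C : Finset α} (hcf : ConflictFree r E)
    (hCp : ∀ c ∈ C, ∃ e ∈ E, r e c) (hEC : ∀ e ∈ E, e ∉ C)
    {s t : Finset α} (ht : t ⊆ C) :
    CompleteIn (s ∪ t) r E ↔ CompleteIn s r E := by
  by_cases hEs : E ⊆ s
  · exact (cpl_inv hcf hCp hEs Finset.subset_union_left
      (Finset.union_subset_union_right ht)).symm
  · constructor
    · intro h
      exfalso
      apply hEs
      intro e he
      rcases Finset.mem_union.mp (h.1.1 he) with h' | h'
      · exact h'
      · exact absurd (ht h') (hEC e he)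
    · intro h
      exact absurd h.1.1 hEs

lemma ite_and_mul (P Q : Prop) (a b : ℝ) :
    (if P ∧ Q then a * b else 0) = (if P then a else 0) * (if Q then b else 0) := by
  by_cases hP : P <;> by_cases hQ : Q <;> simp [hP, hQ]

lemma sdiff_split {A C s t : Finset α} (hCA : C ⊆ A) (hs : s ⊆ A \ C) (ht : t ⊆ C) :
    A \ (s ∪ t) = ((A \ C) \ s) ∪ (C \ t) := by
  ext a
  have h1 : a ∈ s → a ∈ A ∧ a ∉ C := fun h => Finset.mem_sdiff.mp (hs h)
  have h2 : a ∈ t → a ∈ C := fun h => ht h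
  have h3 : a ∈ C → a ∈ A := fun h => hCA h
  simp only [Finset.mem_sdiff, Finset.mem_union]
  tauto

end Stmt12Aux

open Stmt12Aux in
theorem stmt12 (A : Finset α) (R : Finset (α × α)) (hRA : R ⊆ A ×ˢ A)
    (p : α → ℝ) (hp : ∀ a ∈ A, 0 ≤ p a ∧ p a ≤ 1)
    (E : Finset α) (hEA : E ⊆ A)
    (hcf : ConflictFree (fun a b => (a, b) ∈ R) E)
    (Eplus Eminus : Finset α)
    (hEp : Eplus = A.filter (fun b => ∃ a ∈ E, (a, b) ∈ R))
    (hEm : Eminus = A.filter (fun b => ∃ a ∈ E, (b, a) ∈ R)) :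
    ∑ A' ∈ A.powerset.filter
        (fun A' => GroundedIn A' (fun a b => (a, b) ∈ R) E),
        (∏ a ∈ A', p a) * ∏ a ∈ A \ A', (1 - p a)
      = (∑ A' ∈ A.powerset.filter
            (fun A' => CompleteIn A' (fun a b => (a, b) ∈ R) E),
            (∏ a ∈ A', p a) * ∏ a ∈ A \ A', (1 - p a)) *
        ∑ B'' ∈ (Eplus ∩ Eminus).powerset.filter
            (fun B'' => GroundedIn (E ∪ B'') (fun a b => (a, b) ∈ R) E),
            (∏ a ∈ B'', p a) * ∏ b ∈ (Eplus ∩ Eminus) \ B'', (1 - p b) := by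
  classical
  set r : α → α → Prop := fun a b => (a, b) ∈ R with hr
  set C : Finset α := Eplus ∩ Eminus with hC
  have hCA : C ⊆ A := by
    rw [hC, hEp]
    exact Finset.inter_subset_left.trans (Finset.filter_subset _ _)
  have hCp : ∀ c ∈ C, ∃ e ∈ E, r e c := by
    intro c hc
    have h := (Finset.mem_inter.mp hc).1
    rw [hEp, Finset.mem_filter] at h
    exact h.2
  have hEC : ∀ e ∈ E, e ∉ C := by
    intro e he hec
    obtain ⟨c, hcE, hc⟩ := hCp e hec
    exact hcf c hcE e he hc
  have hCm : ∀ (A' : Finset α), A' ⊆ A →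
      ∀ b ∈ A', (∃ a ∈ E, r b a) → (∃ c ∈ E, r c b) → b ∈ C := by
    intro A' hA' b hb h1 h2
    rw [hC]
    refine Finset.mem_inter.mpr ⟨?_, ?_⟩
    · rw [hEp]; exact Finset.mem_filter.mpr ⟨hA' hb, h2⟩
    · rw [hEm]; exact Finset.mem_filter.mpr ⟨hA' hb, h1⟩
  have hdisj : Disjoint (A \ C) C := Finset.sdiff_disjoint
  have hUA : (A \ C) ∪ C = A := Finset.sdiff_union_of_subset hCA
  -- weight splitting
  have hw : ∀ s ∈ (A \ C).powerset, ∀ t ∈ C.powerset,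
      (∏ a ∈ s ∪ t, p a) * ∏ a ∈ A \ (s ∪ t), (1 - p a) =
        ((∏ a ∈ s, p a) * ∏ a ∈ (A \ C) \ s, (1 - p a)) *
          ((∏ a ∈ t, p a) * ∏ a ∈ C \ t, (1 - p a)) := by
    intro s hs t ht
    rw [Finset.mem_powerset] at hs ht
    have hst : Disjoint s t := hdisj.mono hs ht
    have hst2 : Disjoint ((A \ C) \ s) (C \ t) :=
      hdisj.mono (Finset.sdiff_subset) (Finset.sdiff_subset)
    rw [Finset.prod_union hst, sdiff_split hCA hs ht, Finset.prod_union hst2]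
    ring
  -- grounded pointwise decomposition
  have hgrd : ∀ s ∈ (A \ C).powerset, ∀ t ∈ C.powerset,
      (GroundedIn (s ∪ t) r E ↔ CompleteIn s r E ∧ GroundedIn (E ∪ t) r E) := by
    intro s hs t ht
    rw [Finset.mem_powerset] at hs ht
    have hst : (s ∪ t) ∩ C = t := by
      rw [Finset.union_inter_distrib_right,
        Finset.disjoint_iff_inter_eq_empty.mp (hdisj.mono_left hs),
        Finset.inter_eq_left.mpr ht, Finset.empty_union]
    have hkey := grd_key (A' := s ∪ t) hcf hCp
      (hCm (s ∪ t) (Finset.union_subset (hs.trans Finset.sdiff_subset) (ht.trans hCA)))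
    rw [hst, cpl_ext hcf hCp hEC ht] at hkey
    exact hkey
  have hcpl : ∀ s ∈ (A \ C).powerset, ∀ t ∈ C.powerset,
      (CompleteIn (s ∪ t) r E ↔ CompleteIn s r E) := by
    intro s hs t ht
    rw [Finset.mem_powerset] at ht
    exact cpl_ext hcf hCp hEC ht
  have hone : ∑ t ∈ C.powerset, (∏ a ∈ t, p a) * ∏ a ∈ C \ t, (1 - p a) = 1 := by
    rw [← Finset.prod_add]
    simp
  have e1 : ∑ A' ∈ A.powerset.filter (fun A' => GroundedIn A' r E),
        (∏ a ∈ A', p a) * ∏ a ∈ A \ A', (1 - p a)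
      = (∑ s ∈ (A \ C).powerset,
          if CompleteIn s r E then (∏ a ∈ s, p a) * ∏ a ∈ (A \ C) \ s, (1 - p a) else 0) *
        (∑ t ∈ C.powerset,
          if GroundedIn (E ∪ t) r E then (∏ a ∈ t, p a) * ∏ a ∈ C \ t, (1 - p a) else 0) := by
    rw [Finset.sum_mul_sum]
    calc ∑ A' ∈ A.powerset.filter (fun A' => GroundedIn A' r E),
          (∏ a ∈ A', p a) * ∏ a ∈ A \ A', (1 - p a)
        = ∑ A' ∈ A.powerset,
            if GroundedIn A' r E then (∏ a ∈ A', p a) * ∏ a ∈ A \ A', (1 - p a) else 0 :=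
          Finset.sum_filter _ _
      _ = ∑ A' ∈ ((A \ C) ∪ C).powerset,
            if GroundedIn A' r E then (∏ a ∈ A', p a) * ∏ a ∈ A \ A', (1 - p a) else 0 := by
          rw [hUA]
      _ = ∑ s ∈ (A \ C).powerset, ∑ t ∈ C.powerset,
            if GroundedIn (s ∪ t) r E
            then (∏ a ∈ s ∪ t, p a) * ∏ a ∈ A \ (s ∪ t), (1 - p a) else 0 :=
          sum_pow_split hdisj _
      _ = _ := by
          refine Finset.sum_congr rfl fun s hs => Finset.sum_congr rfl fun t ht => ?_
          rw [hw s hs t ht]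
          simp only [hgrd s hs t ht]
          rw [ite_and_mul]
  have e2 : ∑ A' ∈ A.powerset.filter (fun A' => CompleteIn A' r E),
        (∏ a ∈ A', p a) * ∏ a ∈ A \ A', (1 - p a)
      = ∑ s ∈ (A \ C).powerset,
          if CompleteIn s r E then (∏ a ∈ s, p a) * ∏ a ∈ (A \ C) \ s, (1 - p a) else 0 := by
    calc ∑ A' ∈ A.powerset.filter (fun A' => CompleteIn A' r E),
          (∏ a ∈ A', p a) * ∏ a ∈ A \ A', (1 - p a)
        = ∑ A' ∈ A.powerset,
            if CompleteIn A' r E then (∏ a ∈ A', p a) * ∏ a ∈ A \ A', (1 - p a) else 0 :=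
          Finset.sum_filter _ _
      _ = ∑ A' ∈ ((A \ C) ∪ C).powerset,
            if CompleteIn A' r E then (∏ a ∈ A', p a) * ∏ a ∈ A \ A', (1 - p a) else 0 := by
          rw [hUA]
      _ = ∑ s ∈ (A \ C).powerset, ∑ t ∈ C.powerset,
            if CompleteIn (s ∪ t) r E
            then (∏ a ∈ s ∪ t, p a) * ∏ a ∈ A \ (s ∪ t), (1 - p a) else 0 :=
          sum_pow_split hdisj _
      _ = ∑ s ∈ (A \ C).powerset, ∑ t ∈ C.powerset,
            (if CompleteIn s r E
              then (∏ a ∈ s, p a) * ∏ a ∈ (A \ C) \ s, (1 - p a) else 0) *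
            ((∏ a ∈ t, p a) * ∏ a ∈ C \ t, (1 - p a)) := by
          refine Finset.sum_congr rfl fun s hs => Finset.sum_congr rfl fun t ht => ?_
          rw [hw s hs t ht]
          simp only [hcpl s hs t ht]
          by_cases h : CompleteIn s r E <;> simp [h]
      _ = _ := by
          rw [← Finset.sum_mul_sum, hone, mul_one]
  have e3 : ∑ B'' ∈ C.powerset.filter (fun B'' => GroundedIn (E ∪ B'') r E),
        (∏ a ∈ B'', p a) * ∏ b ∈ C \ B'', (1 - p b)
      = ∑ t ∈ C.powerset,
          if GroundedIn (E ∪ t) r E then (∏ a ∈ t, p a) * ∏ a ∈ C \ t, (1 - p a) else 0 :=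
    Finset.sum_filter _ _
  rw [e1, e2, e3]
end

section
/- Let G = (A, R) be a finite argument graph and let E ⊆ A be conflict-free. Let E⁺ = {β ∈ A | ∃α ∈ E, (α, β) ∈ R}, E⁻ = {β ∈ A | ∃α ∈ E, (β, α) ∈ R}, and I = A \ (E ∪ E⁺ ∪ E⁻). Then for every A' ⊆ A, E is a complete extension of the induced subgraph G↾A' if and only if E ⊆ A', A' ∩ (E⁻ \ E⁺) = ∅, and for every α ∈ A' ∩ I, the set {β ∈ A | (β, α) ∈ R} ∩ (A' ∩ I) is nonempty. -/
open scoped Classical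

variable {α : Type*} [DecidableEq α]

theorem stmt13 (A : Finset α) (R : Finset (α × α)) (hRA : R ⊆ A ×ˢ A)
    (E : Finset α) (hEA : E ⊆ A)
    (hcf : ConflictFree (fun a b => (a, b) ∈ R) E)
    (Eplus Eminus I : Finset α)
    (hEp : Eplus = A.filter (fun b => ∃ a ∈ E, (a, b) ∈ R))
    (hEm : Eminus = A.filter (fun b => ∃ a ∈ E, (b, a) ∈ R))
    (hI : I = A \ (E ∪ Eplus ∪ Eminus))
    (A' : Finset α) (hA' : A' ⊆ A) :
    CompleteIn A' (fun a b => (a, b) ∈ R) E ↔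
      (E ⊆ A' ∧ A' ∩ (Eminus \ Eplus) = ∅ ∧
        ∀ a ∈ A' ∩ I, ((A.filter (fun b => (b, a) ∈ R)) ∩ (A' ∩ I)).Nonempty) := by
  
  have memI : ∀ x, x ∈ I ↔ x ∈ A ∧ x ∉ E ∧ (¬ ∃ a ∈ E, (a, x) ∈ R) ∧ (¬ ∃ a ∈ E, (x, a) ∈ R) := by
    intro x
    subst hI hEp hEm
    simp only [Finset.mem_sdiff, Finset.mem_union, Finset.mem_filter]
    constructor
    · rintro ⟨hxA, h⟩
      push_neg at h
      obtain ⟨⟨h1, h2⟩, h3⟩ := h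
      exact ⟨hxA, h1, fun ⟨a, ha, hr⟩ => h2 hxA a ha hr, fun ⟨a, ha, hr⟩ => h3 hxA a ha hr⟩
    · rintro ⟨hxA, h1, h2, h3⟩
      refine ⟨hxA, ?_⟩
      push_neg
      exact ⟨⟨h1, fun _ a ha hr => h2 ⟨a, ha, hr⟩⟩, fun _ a ha hr => h3 ⟨a, ha, hr⟩⟩
  constructor
  · rintro ⟨⟨hEA', hcf', hacc⟩, hcomp⟩
    refine ⟨hEA', ?_, ?_⟩
    · ext x
      subst hEp hEm
      simp only [Finset.mem_inter, Finset.mem_sdiff, Finset.mem_filter, Finset.notMem_empty,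
        iff_false]
      rintro ⟨hxA', ⟨hxA, c, hcE, hxc⟩, hnot⟩
      obtain ⟨d, hdE, hd⟩ := hacc c hcE x ⟨hxA', hEA' hcE, hxc⟩
      exact hnot ⟨hxA, d, hdE, hd.2.2⟩
    · intro a ha
      rw [Finset.mem_inter, memI] at ha
      obtain ⟨haA', haA, haE, haEp, haEm⟩ := ha
      by_contra hempty
      rw [Finset.not_nonempty_iff_eq_empty] at hempty
      apply haE
      apply hcomp a haA'
      intro b hb
      obtain ⟨hbA', -, hba⟩ := hb
      have hbA : b ∈ A := hA' hbA'
      by_cases hbEp : ∃ c ∈ E, (c, b) ∈ R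
      · obtain ⟨c, hcE, hcb⟩ := hbEp
        exact ⟨c, hcE, hEA' hcE, hbA', hcb⟩
      · by_cases hbEm : ∃ c ∈ E, (b, c) ∈ R
        · obtain ⟨c, hcE, hbc⟩ := hbEm
          obtain ⟨d, hdE, hd⟩ := hacc c hcE b ⟨hbA', hEA' hcE, hbc⟩
          exact ⟨d, hdE, hd⟩
        · have hbE : b ∉ E := fun h => haEp ⟨b, h, hba⟩
          have hbI : b ∈ I := (memI b).2 ⟨hbA, hbE, hbEp, hbEm⟩
          have : b ∈ (A.filter (fun b => (b, a) ∈ R)) ∩ (A' ∩ I) := by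
            simp only [Finset.mem_inter, Finset.mem_filter]
            exact ⟨⟨hbA, hba⟩, hbA', hbI⟩
          rw [hempty] at this
          exact absurd this (Finset.notMem_empty b)
  · rintro ⟨hEA', hdis, hdef⟩
    have key : ∀ b ∈ A', (∃ c ∈ E, (b, c) ∈ R) → ∃ d ∈ E, (d, b) ∈ R := by
      intro b hbA' hbEm
      by_contra h
      have : b ∈ A' ∩ (Eminus \ Eplus) := by
        subst hEp hEm
        simp only [Finset.mem_inter, Finset.mem_sdiff, Finset.mem_filter]
        push_neg at h
        exact ⟨hbA', ⟨hA' hbA', by obtain ⟨c, hc, hr⟩ := hbEm; exact ⟨c, hc, hr⟩⟩,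
          fun ⟨_, d, hdE, hdb⟩ => h d hdE hdb⟩
      rw [hdis] at this
      exact absurd this (Finset.notMem_empty b)
    have haccE : ∀ a ∈ E, Acceptable (Restrict A' (fun a b => (a, b) ∈ R)) E a := by
      intro a haE b hb
      obtain ⟨hbA', -, hba⟩ := hb
      obtain ⟨d, hdE, hdb⟩ := key b hbA' ⟨a, haE, hba⟩
      exact ⟨d, hdE, hEA' hdE, hbA', hdb⟩
    refine ⟨⟨hEA', fun a ha b hb hr => hcf a ha b hb hr.2.2, haccE⟩, ?_⟩
    intro a haA' hacc
    by_contra haE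
    by_cases haEp : ∃ c ∈ E, (c, a) ∈ R
    · obtain ⟨c, hcE, hca⟩ := haEp
      obtain ⟨d, hdE, hd⟩ := hacc c ⟨hEA' hcE, haA', hca⟩
      exact hcf d hdE c hcE hd.2.2
    · by_cases haEm : ∃ c ∈ E, (a, c) ∈ R
      · obtain ⟨d, hdE, hda⟩ := key a haA' haEm
        exact haEp ⟨d, hdE, hda⟩
      · have haI : a ∈ I := (memI a).2 ⟨hA' haA', haE, haEp, haEm⟩
        obtain ⟨b, hb⟩ := hdef a (Finset.mem_inter.2 ⟨haA', haI⟩)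
        simp only [Finset.mem_inter, Finset.mem_filter] at hb
        obtain ⟨⟨hbA, hba⟩, hbA', hbI⟩ := hb
        obtain ⟨c, hcE, hc⟩ := hacc b ⟨hbA', haA', hba⟩
        exact ((memI b).1 hbI).2.2.1 ⟨c, hcE, hc.2.2⟩
end

section
/- Let G = (A, R) be a finite argument graph and let E ⊆ A be conflict-free. Let E⁺ = {β ∈ A | ∃α ∈ E, (α, β) ∈ R}, E⁻ = {β ∈ A | ∃α ∈ E, (β, α) ∈ R}, and I = A \ (E ∪ E⁺ ∪ E⁻). Then for every A' ⊆ A, E is a preferred extension of the induced subgraph G↾A' if and only if the following all hold: E ⊆ A'; A' ∩ (E⁻ \ E⁺) = ∅; for every α ∈ A' ∩ I, the set {β ∈ A | (β, α) ∈ R} ∩ (A' ∩ I) is nonempty; and the empty set is the only admissible set of the induced subgraph G↾(A' ∩ I). -/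
open scoped Classical

variable {α : Type*} [DecidableEq α]

theorem stmt14 (A : Finset α) (R : Finset (α × α)) (hRA : R ⊆ A ×ˢ A)
    (E : Finset α) (hEA : E ⊆ A)
    (hcf : ConflictFree (fun a b => (a, b) ∈ R) E)
    (Eplus Eminus I : Finset α)
    (hEp : Eplus = A.filter (fun b => ∃ a ∈ E, (a, b) ∈ R))
    (hEm : Eminus = A.filter (fun b => ∃ a ∈ E, (b, a) ∈ R))
    (hI : I = A \ (E ∪ Eplus ∪ Eminus))
    (A' : Finset α) (hA' : A' ⊆ A) :
    PreferredIn A' (fun a b => (a, b) ∈ R) E ↔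
      (E ⊆ A' ∧ A' ∩ (Eminus \ Eplus) = ∅ ∧
        (∀ a ∈ A' ∩ I, ((A.filter (fun b => (b, a) ∈ R)) ∩ (A' ∩ I)).Nonempty) ∧
        (∀ S : Finset α, AdmissibleIn (A' ∩ I) (fun a b => (a, b) ∈ R) S ↔ S = ∅)) := by

  have hmem : ∀ {a b : α}, (a, b) ∈ R → a ∈ A ∧ b ∈ A := by
    intro a b h
    simpa [Finset.mem_product] using hRA h
  have hEpIff : ∀ x, x ∈ Eplus ↔ ∃ a ∈ E, (a, x) ∈ R := by
    intro x
    rw [hEp, Finset.mem_filter]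
    constructor
    · rintro ⟨-, h⟩; exact h
    · rintro ⟨a, ha, hr⟩; exact ⟨(hmem hr).2, a, ha, hr⟩
  have hEmIff : ∀ x, x ∈ Eminus ↔ ∃ a ∈ E, (x, a) ∈ R := by
    intro x
    rw [hEm, Finset.mem_filter]
    constructor
    · rintro ⟨-, h⟩; exact h
    · rintro ⟨a, ha, hr⟩; exact ⟨(hmem hr).1, a, ha, hr⟩
  have hIIff : ∀ x, x ∈ I ↔ x ∈ A ∧ x ∉ E ∧ x ∉ Eplus ∧ x ∉ Eminus := by
    intro x
    rw [hI]
    simp only [Finset.mem_sdiff, Finset.mem_union]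
    tauto
  -- characterization of admissibility of E in A'
  have hadm_iff : AdmissibleIn A' (fun a b => (a, b) ∈ R) E ↔
      E ⊆ A' ∧ A' ∩ (Eminus \ Eplus) = ∅ := by
    constructor
    · rintro ⟨hsub, -, hacc⟩
      refine ⟨hsub, Finset.eq_empty_iff_forall_notMem.mpr ?_⟩
      intro x hx
      rw [Finset.mem_inter, Finset.mem_sdiff] at hx
      obtain ⟨hxA', hxEm, hxEp⟩ := hx
      obtain ⟨a, ha, hr⟩ := (hEmIff x).mp hxEm
      obtain ⟨c, hc, -, -, hrc⟩ := hacc a ha x ⟨hxA', hsub ha, hr⟩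
      exact hxEp ((hEpIff x).mpr ⟨c, hc, hrc⟩)
    · rintro ⟨hsub, hdis⟩
      refine ⟨hsub, ?_, ?_⟩
      · intro a ha b hb hr; exact hcf a ha b hb hr.2.2
      · rintro a ha b ⟨hbA', -, hr⟩
        have hbEm : b ∈ Eminus := (hEmIff b).mpr ⟨a, ha, hr⟩
        by_cases hbEp : b ∈ Eplus
        · obtain ⟨c, hc, hrc⟩ := (hEpIff b).mp hbEp
          exact ⟨c, hc, hsub hc, hbA', hrc⟩
        · exfalso
          have : b ∈ A' ∩ (Eminus \ Eplus) := by
            rw [Finset.mem_inter, Finset.mem_sdiff]; exact ⟨hbA', hbEm, hbEp⟩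
          rw [hdis] at this
          exact absurd this (Finset.notMem_empty b)
  -- joining lemma
  have hjoin : E ⊆ A' → A' ∩ (Eminus \ Eplus) = ∅ →
      ∀ S : Finset α, AdmissibleIn (A' ∩ I) (fun a b => (a, b) ∈ R) S →
      AdmissibleIn A' (fun a b => (a, b) ∈ R) (E ∪ S) := by
    intro h1 h2 S hS
    obtain ⟨hSsub, hScf, hSacc⟩ := hS
    have hSI : ∀ x ∈ S, x ∈ I := fun x hx => (Finset.mem_inter.mp (hSsub hx)).2
    have hSA' : ∀ x ∈ S, x ∈ A' := fun x hx => (Finset.mem_inter.mp (hSsub hx)).1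
    refine ⟨?_, ?_, ?_⟩
    · intro x hx
      rcases Finset.mem_union.mp hx with hx | hx
      · exact h1 hx
      · exact hSA' x hx
    · intro a ha b hb hr
      rcases Finset.mem_union.mp ha with ha | ha <;> rcases Finset.mem_union.mp hb with hb | hb
      · exact hcf a ha b hb hr.2.2
      · have : b ∈ Eplus := (hEpIff b).mpr ⟨a, ha, hr.2.2⟩
        exact ((hIIff b).mp (hSI b hb)).2.2.1 this
      · have : a ∈ Eminus := (hEmIff a).mpr ⟨b, hb, hr.2.2⟩
        exact ((hIIff a).mp (hSI a ha)).2.2.2 this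
      · exact hScf a ha b hb ⟨hSsub ha, hSsub hb, hr.2.2⟩
    · rintro a ha b ⟨hbA', -, hr⟩
      rcases Finset.mem_union.mp ha with ha | ha
      · have hbEm : b ∈ Eminus := (hEmIff b).mpr ⟨a, ha, hr⟩
        by_cases hbEp : b ∈ Eplus
        · obtain ⟨c, hc, hrc⟩ := (hEpIff b).mp hbEp
          exact ⟨c, Finset.mem_union_left _ hc, h1 hc, hbA', hrc⟩
        · exfalso
          have : b ∈ A' ∩ (Eminus \ Eplus) := by
            rw [Finset.mem_inter, Finset.mem_sdiff]; exact ⟨hbA', hbEm, hbEp⟩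
          rw [h2] at this
          exact absurd this (Finset.notMem_empty b)
      · by_cases hbEp : b ∈ Eplus
        · obtain ⟨c, hc, hrc⟩ := (hEpIff b).mp hbEp
          exact ⟨c, Finset.mem_union_left _ hc, h1 hc, hbA', hrc⟩
        · by_cases hbI : b ∈ I
          · obtain ⟨c, hc, hcAI, -, hrc⟩ :=
              hSacc a ha b ⟨Finset.mem_inter.mpr ⟨hbA', hbI⟩, hSsub ha, hr⟩
            exact ⟨c, Finset.mem_union_right _ hc, (Finset.mem_inter.mp hcAI).1, hbA', hrc⟩
          · exfalso
            have hbA : b ∈ A := (hmem hr).1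
            by_cases hbE : b ∈ E
            · have : a ∈ Eplus := (hEpIff a).mpr ⟨b, hbE, hr⟩
              exact ((hIIff a).mp (hSI a ha)).2.2.1 this
            · by_cases hbEm : b ∈ Eminus
              · have : b ∈ A' ∩ (Eminus \ Eplus) := by
                  rw [Finset.mem_inter, Finset.mem_sdiff]; exact ⟨hbA', hbEm, hbEp⟩
                rw [h2] at this
                exact absurd this (Finset.notMem_empty b)
              · exact hbI ((hIIff b).mpr ⟨hbA, hbE, hbEp, hbEm⟩)
  -- splitting lemma
  have hsplit : ∀ F : Finset α, AdmissibleIn A' (fun a b => (a, b) ∈ R) F → E ⊆ F →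
      AdmissibleIn (A' ∩ I) (fun a b => (a, b) ∈ R) (F \ E) := by
    intro F hF hEF
    obtain ⟨hFsub, hFcf, hFacc⟩ := hF
    have hFnoEp : ∀ x ∈ F, x ∉ Eplus := by
      intro x hx hxEp
      obtain ⟨a, ha, hr⟩ := (hEpIff x).mp hxEp
      exact hFcf a (hEF ha) x hx ⟨hFsub (hEF ha), hFsub hx, hr⟩
    have hFnoEm : ∀ x ∈ F, x ∉ Eminus := by
      intro x hx hxEm
      obtain ⟨a, ha, hr⟩ := (hEmIff x).mp hxEm
      exact hFcf x hx a (hEF ha) ⟨hFsub hx, hFsub (hEF ha), hr⟩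
    have hsub : F \ E ⊆ A' ∩ I := by
      intro x hx
      obtain ⟨hxF, hxE⟩ := Finset.mem_sdiff.mp hx
      refine Finset.mem_inter.mpr ⟨hFsub hxF, (hIIff x).mpr ⟨hA' (hFsub hxF), hxE, hFnoEp x hxF, hFnoEm x hxF⟩⟩
    refine ⟨hsub, ?_, ?_⟩
    · intro a ha b hb hr
      exact hFcf a (Finset.mem_sdiff.mp ha).1 b (Finset.mem_sdiff.mp hb).1
        ⟨(Finset.mem_inter.mp hr.1).1, (Finset.mem_inter.mp hr.2.1).1, hr.2.2⟩
    · rintro a ha b ⟨hbAI, -, hr⟩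
      obtain ⟨hbA', hbI⟩ := Finset.mem_inter.mp hbAI
      obtain ⟨c, hc, -, -, hrc⟩ :=
        hFacc a (Finset.mem_sdiff.mp ha).1 b ⟨hbA', hFsub (Finset.mem_sdiff.mp ha).1, hr⟩
      have hcE : c ∉ E := by
        intro hcE
        exact ((hIIff b).mp hbI).2.2.1 ((hEpIff b).mpr ⟨c, hcE, hrc⟩)
      have hcFE : c ∈ F \ E := Finset.mem_sdiff.mpr ⟨hc, hcE⟩
      exact ⟨c, hcFE, hsub hcFE, hbAI, hrc⟩
  constructor
  · rintro ⟨hadm, hmax⟩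
    obtain ⟨h1, h2⟩ := hadm_iff.mp hadm
    have h4 : ∀ S : Finset α,
        AdmissibleIn (A' ∩ I) (fun a b => (a, b) ∈ R) S ↔ S = ∅ := by
      intro S
      constructor
      · intro hS
        have hEUS := hjoin h1 h2 S hS
        have heq := hmax _ hEUS Finset.subset_union_left
        rw [Finset.eq_empty_iff_forall_notMem]
        intro x hx
        have hxE : x ∈ E := by
          have : x ∈ E ∪ S := Finset.mem_union_right _ hx
          rwa [heq] at this
        exact ((hIIff x).mp (Finset.mem_inter.mp (hS.1 hx)).2).2.1 hxE
      · rintro rfl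
        exact ⟨Finset.empty_subset _,
          fun a ha => absurd ha (Finset.notMem_empty a),
          fun a ha => absurd ha (Finset.notMem_empty a)⟩
    have h3 : ∀ a ∈ A' ∩ I,
        ((A.filter (fun b => (b, a) ∈ R)) ∩ (A' ∩ I)).Nonempty := by
      intro a ha
      by_contra hne
      rw [Finset.not_nonempty_iff_eq_empty] at hne
      have hnoatt : ∀ b ∈ A' ∩ I, ¬ (b, a) ∈ R := by
        intro b hb hr
        have : b ∈ (A.filter (fun b => (b, a) ∈ R)) ∩ (A' ∩ I) :=
          Finset.mem_inter.mpr ⟨Finset.mem_filter.mpr ⟨(hmem hr).1, hr⟩, hb⟩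
        rw [hne] at this
        exact absurd this (Finset.notMem_empty b)
      have hsing : AdmissibleIn (A' ∩ I) (fun a b => (a, b) ∈ R) {a} := by
        refine ⟨Finset.singleton_subset_iff.mpr ha, ?_, ?_⟩
        · intro x hx y hy hr
          rw [Finset.mem_singleton] at hx hy
          subst hx; subst hy
          exact hnoatt _ hr.1 hr.2.2
        · intro x hx b hrb
          rw [Finset.mem_singleton] at hx
          subst hx
          exact absurd hrb.2.2 (hnoatt b hrb.1)
      have := (h4 {a}).mp hsing
      exact absurd this (Finset.singleton_ne_empty a)
    exact ⟨h1, h2, h3, h4⟩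
  · rintro ⟨h1, h2, -, h4⟩
    refine ⟨hadm_iff.mpr ⟨h1, h2⟩, ?_⟩
    intro F hF hEF
    have hFE : F \ E = ∅ := (h4 _).mp (hsplit F hF hEF)
    exact Finset.Subset.antisymm (Finset.sdiff_eq_empty_iff_subset.mp hFE) hEF
end
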